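/- arXiv:1407.1392 — 6 statements merged into one kernel-verified Lean document; each statement's English description precedes it below -/
import Mathlib

section
/- Assume G is strongly distance-regular (equivalently, (1 + λ1)(1 + λ3) = (1 + λ2)(1 + λ4) = −b1). Then G is antipodal if and only if λ1 + λ3 = a1. -/
open Finset

attribute [local instance] Classical.propDecidable

/-- The distance-`d` graph of `G`: two distinct vertices are adjacent iff
they are at distance `d` in `G`. -/
def SimpleGraph.distGraph {V : Type*} (G : SimpleGraph V) (d : ℕ) : SimpleGraph V where
  Adj u v := u ≠ v ∧ G.dist u v = d
  symm := ⟨fun u v h => ⟨h.1.symm, by rw [SimpleGraph.dist_comm]; exact h.2⟩⟩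
  loopless := ⟨fun u h => h.1 rfl⟩

/-- `G` is strongly distance-regular (for diameter `d`) if its distance-`d` graph
is strongly regular. -/
def SimpleGraph.IsStronglyDRG {V : Type*} [Fintype V] (G : SimpleGraph V) (d : ℕ) : Prop :=
  ∃ n k ℓ μ, (G.distGraph d).IsSRGWith n k ℓ μ

/-- `G` is distance-regular with diameter `d` and intersection numbers `c i, a i, b i`. -/
def SimpleGraph.IsDistRegular {V : Type*} [Fintype V] (G : SimpleGraph V)
    (d : ℕ) (c a b : ℕ → ℕ) : Prop :=
  ∀ i ≤ d, ∀ u v : V, G.dist u v = i →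
    ((G.neighborFinset v).filter (fun w => G.dist u w = i - 1)).card = c i ∧
    ((G.neighborFinset v).filter (fun w => G.dist u w = i)).card = a i ∧
    ((G.neighborFinset v).filter (fun w => G.dist u w = i + 1)).card = b i

/-- The adjacency matrix of `G`, viewed as an endomorphism of `V → ℝ`. -/
noncomputable def SimpleGraph.adjEnd {V : Type*} [Fintype V] [DecidableEq V]
    (G : SimpleGraph V) : Module.End ℝ (V → ℝ) :=
  Matrix.toLin' (G.adjMatrix ℝ)

/-- The (real) adjacency spectrum of `G` consists exactly of the distinct eigenvalues
`lam 0 > lam 1 > ⋯ > lam d`, where `lam i` has multiplicity `m i`. -/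
def SimpleGraph.HasSpectrum {V : Type*} [Fintype V] [DecidableEq V] (G : SimpleGraph V)
    {d : ℕ} (lam : Fin (d + 1) → ℝ) (m : Fin (d + 1) → ℕ) : Prop :=
  StrictAnti lam ∧
  (∀ i, Module.End.HasEigenvalue G.adjEnd (lam i)) ∧
  (∀ μ : ℝ, Module.End.HasEigenvalue G.adjEnd μ → ∃ i, μ = lam i) ∧
  (∀ i, m i = Module.finrank ℝ (Module.End.eigenspace G.adjEnd (lam i)))

/-- `G` is antipodal (for diameter `d`): being equal or at distance `d`
is an equivalence relation on the vertices. -/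
def SimpleGraph.IsAntipodal {V : Type*} (G : SimpleGraph V) (d : ℕ) : Prop :=
  Equivalence (fun u v => u = v ∨ G.dist u v = d)

/-- `G` is `r`-antipodal (for diameter `d`): antipodal with all classes of size `r`. -/
def SimpleGraph.IsAntipodalWith {V : Type*} (G : SimpleGraph V) (d r : ℕ) : Prop :=
  G.IsAntipodal d ∧ ∀ u : V, Nat.card {v : V | u = v ∨ G.dist u v = d} = r


section Aux

/-- Two linear equations at distinct points kill both coefficients. -/
lemma lin_two {B C x y : ℝ} (hx : B*x + C = 0) (hy : B*y + C = 0) (hxy : x ≠ y) :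
    B = 0 ∧ C = 0 := by
  have h : (x - y) * B = 0 := by linear_combination hx - hy
  have hB : B = 0 := by
    rcases mul_eq_zero.mp h with h' | h'
    · exact absurd (sub_eq_zero.mp h') hxy
    · exact h'
  refine ⟨hB, ?_⟩
  linear_combination hx - x * hB

/-- Vieta-style relations for a quadratic vanishing at two distinct points
(no nonvanishing assumption on the leading coefficient). -/
lemma quad_two {A B C x y : ℝ} (hx : A*x^2 + B*x + C = 0) (hy : A*y^2 + B*y + C = 0)
    (hxy : x ≠ y) : A*(x+y) + B = 0 ∧ A*(x*y) - C = 0 := by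
  have h : (x - y) * (A*(x+y) + B) = 0 := by linear_combination hx - hy
  have h1 : A*(x+y) + B = 0 := by
    rcases mul_eq_zero.mp h with h' | h'
    · exact absurd (sub_eq_zero.mp h') hxy
    · exact h'
  exact ⟨h1, by linear_combination x * h1 - hx⟩

/-- A genuine quadratic cannot vanish at three distinct points. -/
lemma quad_three {A B C x y z : ℝ} (hA : A ≠ 0)
    (hx : A*x^2 + B*x + C = 0) (hy : A*y^2 + B*y + C = 0) (hz : A*z^2 + B*z + C = 0)
    (hxy : x ≠ y) (hxz : x ≠ z) (hyz : y ≠ z) : False := by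
  have h1 := (quad_two hx hy hxy).1
  have h2 := (quad_two hx hz hxz).1
  have : A * (y - z) = 0 := by linear_combination h1 - h2
  rcases mul_eq_zero.mp this with h' | h'
  · exact hA h'
  · exact hyz (sub_eq_zero.mp h')

/-- Monic quadratic (in the form `w^2 = U*w + W`) has at most two roots. -/
lemma val_three {U W x y z : ℝ} (hx : x^2 = U*x + W) (hy : y^2 = U*y + W)
    (hz : z^2 = U*z + W) : x = y ∨ x = z ∨ y = z := by
  by_contra h
  push_neg at h
  exact quad_three (A := 1) (B := -U) (C := -W) one_ne_zero
    (by linear_combination hx) (by linear_combination hy) (by linear_combination hz)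
    h.1 h.2.1 h.2.2

/-- Master relations extracted from the per-class equations of a strongly
distance-regular graph of diameter 4. Class 1 is `{α, β}` with `G₄`-eigenvalue
`x`, class 2 is `{γ, δ}` with `G₄`-eigenvalue `y`. -/
lemma master {k a1 a2 a3 a4 b1 b2 b3 c2 c3 c4 : ℝ} {α β x γ δ y : ℝ}
    (hb2 : 0 < b2) (hb3 : 0 < b3) (hc2 : 0 < c2)
    (hab : α ≠ β) (hgd : γ ≠ δ) (hxy : x ≠ y)
    (hEa : b3*(α^2 - a1*α - k) + c2*b3*(1+α) + c2*x*(b3+α-a4) = 0)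
    (hEb : b3*(β^2 - a1*β - k) + c2*b3*(1+β) + c2*x*(b3+β-a4) = 0)
    (hCa : c3*(α-a4)*x + (α-a2)*(b3*(1+α+x)+(α-a4)*x) + b1*b3*α = 0)
    (hCb : c3*(β-a4)*x + (β-a2)*(b3*(1+β+x)+(β-a4)*x) + b1*b3*β = 0)
    (hDa : (α-a3)*(α-a4)*x + b2*b3*(1+α+x) + b2*(α-a4)*x - c4*b3*x = 0)
    (hDb : (β-a3)*(β-a4)*x + b2*b3*(1+β+x) + b2*(β-a4)*x - c4*b3*x = 0)
    (hEg : b3*(γ^2 - a1*γ - k) + c2*b3*(1+γ) + c2*y*(b3+γ-a4) = 0)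
    (hEd : b3*(δ^2 - a1*δ - k) + c2*b3*(1+δ) + c2*y*(b3+δ-a4) = 0)
    (hCg : c3*(γ-a4)*y + (γ-a2)*(b3*(1+γ+y)+(γ-a4)*y) + b1*b3*γ = 0)
    (hCd : c3*(δ-a4)*y + (δ-a2)*(b3*(1+δ+y)+(δ-a4)*y) + b1*b3*δ = 0)
    (hDg : (γ-a3)*(γ-a4)*y + b2*b3*(1+γ+y) + b2*(γ-a4)*y - c4*b3*y = 0)
    (hDd : (δ-a3)*(δ-a4)*y + b2*b3*(1+δ+y) + b2*(δ-a4)*y - c4*b3*y = 0) :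
    b3 = a4 + 1 ∧ c3*b3 = k - 1 - a1 ∧ c2*(x*y) = -(b2*b3^2) ∧
      c2*(x+y) = b3*(a1+b2-a3-a4-c2) := by
  -- linear-in-λ reductions per class (the two key polynomial identities)
  have hL : ∀ l z : ℝ,
      (b3*(l^2 - a1*l - k) + c2*b3*(1+l) + c2*z*(b3+l-a4) = 0) →
      (c3*(l-a4)*z + (l-a2)*(b3*(1+l+z)+(l-a4)*z) + b1*b3*l = 0) →
      ((-c2*z^2 + b3*c3*z - 2*b3*c2*z + b3^2 + b3^2*z - b3^2*c2 + b1*b3^2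
          - a4*b3*z - a2*b3*z - a2*b3^2 + a1*b3*z + a1*b3^2) * l +
       (-(b3*c2*z) - b3*c2*z^2 - b3^2*c2 - b3^2*c2*z + a4*c2*z^2 - a4*b3*c3*z
          + a4*b3*c2*z - a2*b3^2 - a2*b3^2*z + a2*a4*b3*z + k*b3*z + k*b3^2) = 0) := by
    intro l z hE hC
    linear_combination b3 * hC - (b3 + z) * hE
  have hM : ∀ l z : ℝ,
      (b3*(l^2 - a1*l - k) + c2*b3*(1+l) + c2*z*(b3+l-a4) = 0) →
      ((l-a3)*(l-a4)*z + b2*b3*(1+l+z) + b2*(l-a4)*z - c4*b3*z = 0) →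
      ((-c2*z^2 - b3*c2*z + b2*b3*z + b2*b3^2 - a4*b3*z - a3*b3*z + a1*b3*z) * l +
       (-(b3*c2*z) - b3*c2*z^2 - b3^2*c4*z + b2*b3^2 + b2*b3^2*z + a4*c2*z^2
          - a4*b2*b3*z + a3*a4*b3*z + k*b3*z) = 0) := by
    intro l z hE hD
    linear_combination b3 * hD - z * hE
  -- kill the coefficients: per-class scalar equations (quadratics in the class value)
  obtain ⟨hclinx, hccstx⟩ := lin_two (hL α x hEa hCa) (hL β x hEb hCb) hab
  obtain ⟨hcliny, hccsty⟩ := lin_two (hL γ y hEg hCg) (hL δ y hEd hCd) hgd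
  obtain ⟨hdlinx, hdcstx⟩ := lin_two (hM α x hEa hDa) (hM β x hEb hDb) hab
  obtain ⟨hdliny, hdcsty⟩ := lin_two (hM γ y hEg hDg) (hM δ y hEd hDd) hgd
  -- Vieta in the class values
  obtain ⟨e1, e2⟩ := quad_two (A := -c2)
    (B := b3*c3 - 2*b3*c2 + b3^2 - a4*b3 - a2*b3 + a1*b3)
    (C := b3^2 - b3^2*c2 + b1*b3^2 - a2*b3^2 + a1*b3^2)
    (by linear_combination hclinx) (by linear_combination hcliny) hxy
  obtain ⟨e3, e4⟩ := quad_two (A := a4*c2 - b3*c2)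
    (B := -(b3*c2) - b3^2*c2 - a4*b3*c3 + a4*b3*c2 - a2*b3^2 + a2*a4*b3 + k*b3)
    (C := -(b3^2*c2) - a2*b3^2 + k*b3^2)
    (by linear_combination hccstx) (by linear_combination hccsty) hxy
  obtain ⟨e5, e6⟩ := quad_two (A := -c2)
    (B := -(b3*c2) + b2*b3 - a4*b3 - a3*b3 + a1*b3)
    (C := b2*b3^2)
    (by linear_combination hdlinx) (by linear_combination hdliny) hxy
  obtain ⟨e7, e8⟩ := quad_two (A := a4*c2 - b3*c2)
    (B := -(b3*c2) - b3^2*c4 + b2*b3^2 - a4*b2*b3 + a3*a4*b3 + k*b3)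
    (C := b2*b3^2)
    (by linear_combination hdcstx) (by linear_combination hdcsty) hxy
  -- M1 : b3 = a4 + 1
  have hM1 : b3 = a4 + 1 := by
    have h0 : b2*b3^2*(a4 - b3 + 1) = 0 := by linear_combination (b3 - a4) * e6 - e8
    have hne : b2*b3^2 ≠ 0 := by positivity
    rcases mul_eq_zero.mp h0 with h' | h'
    · exact absurd h' hne
    · linarith
  -- M2 : c3*b3 = k - 1 - a1
  have hM2 : c3*b3 = k - 1 - a1 := by
    have h0 : b3*((k - 1 - a1) - c3*b3) = 0 := by
      linear_combination (-1) * e1 + e3 +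
        (c2*(x+y) + b3 - b3*c3 + b3*c2 + a2*b3) * hM1
    rcases mul_eq_zero.mp h0 with h' | h'
    · exact absurd h' (ne_of_gt hb3)
    · linarith
  refine ⟨hM1, hM2, by linear_combination -e6, ?_⟩
  linear_combination (-1) * e5

/-- Vieta relations for the quadratic `E(·,x)` at two distinct roots. -/
lemma vieta_E {k a1 a4 b3 c2 α β x : ℝ} (hab : α ≠ β)
    (hEa : b3*(α^2 - a1*α - k) + c2*b3*(1+α) + c2*x*(b3+α-a4) = 0)
    (hEb : b3*(β^2 - a1*β - k) + c2*b3*(1+β) + c2*x*(b3+β-a4) = 0) :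
    (b3*(α+β) + (c2*x + c2*b3 - a1*b3) = 0) ∧
    (b3*(α*β) - (b3*c2 + b3*c2*x - a4*c2*x - k*b3) = 0) :=
  quad_two (A := b3) (B := c2*x + c2*b3 - a1*b3)
    (C := b3*c2 + b3*c2*x - a4*c2*x - k*b3)
    (by linear_combination hEa) (by linear_combination hEb) hab

/-- The quadratic `E(·,x)` cannot vanish at three distinct points. -/
lemma three_E {k a1 a4 b3 c2 p q r z : ℝ} (hb3 : 0 < b3)
    (hp : b3*(p^2 - a1*p - k) + c2*b3*(1+p) + c2*z*(b3+p-a4) = 0)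
    (hq : b3*(q^2 - a1*q - k) + c2*b3*(1+q) + c2*z*(b3+q-a4) = 0)
    (hr : b3*(r^2 - a1*r - k) + c2*b3*(1+r) + c2*z*(b3+r-a4) = 0)
    (hpq : p ≠ q) (hpr : p ≠ r) (hqr : q ≠ r) : False :=
  quad_three (A := b3) (B := c2*z + c2*b3 - a1*b3)
    (C := b3*c2 + b3*c2*z - a4*c2*z - k*b3) (ne_of_gt hb3)
    (by linear_combination hp) (by linear_combination hq) (by linear_combination hr)
    hpq hpr hqr

/-- Each class of a strongly DRG of diameter 4 separates around `-1`. -/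
lemma sep_E {k a1 b1 a4 b3 c2 α β x : ℝ} (hb3 : 0 < b3) (hb1 : 0 < b1)
    (hK1 : k = 1 + a1 + b1) (hM1 : b3 = a4 + 1) (hba : β < α)
    (hV1 : b3*(α+β) + (c2*x + c2*b3 - a1*b3) = 0)
    (hV2 : b3*(α*β) - (b3*c2 + b3*c2*x - a4*c2*x - k*b3) = 0) :
    β < -1 ∧ -1 < α := by
  have hprod : b3*((1+α)*(1+β)) = -(b3*b1) := by
    linear_combination hV1 + hV2 + c2*x*hM1 - b3*hK1
  have hneg : (1+α)*(1+β) < 0 := by nlinarith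
  constructor <;> nlinarith

/-- Cross-evaluation of the quadratic of one class at an eigenvalue of the other. -/
lemma cross_E {k a1 a4 b3 c2 α β x γ y : ℝ}
    (hV1 : b3*(α+β) + (c2*x + c2*b3 - a1*b3) = 0)
    (hV2 : b3*(α*β) - (b3*c2 + b3*c2*x - a4*c2*x - k*b3) = 0)
    (hEg : b3*(γ^2 - a1*γ - k) + c2*b3*(1+γ) + c2*y*(b3+γ-a4) = 0)
    (hM1 : b3 = a4 + 1) :
    b3*((γ-α)*(γ-β)) = c2*(x - y)*(γ + 1) := by
  linear_combination (-γ)*hV1 + hV2 + hEg + c2*(x-y)*hM1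

/-- The central algebraic result: for a strongly distance-regular graph of
diameter 4, given the eigenvalue relations, `a4 = 0` iff `λ1 + λ3 = a1`. -/
lemma keyAlgebra {k a1 a2 a3 a4 b1 b2 b3 c2 c3 c4 ll mu k4 : ℝ}
    {l1 l2 l3 l4 x1 x2 x3 x4 : ℝ}
    (hb1 : 0 < b1) (hb2 : 0 < b2) (hb3 : 0 < b3) (hc2 : 0 < c2) (hc3 : 0 < c3)
    (hc4 : 0 < c4) (hk : 0 < k)
    (hK1 : k = 1 + a1 + b1) (hK3 : k = a3 + b3 + c3) (hK4 : k = a4 + c4)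
    (h12 : l2 < l1) (h23 : l3 < l2) (h34 : l4 < l3)
    (hE1 : b3*(l1^2 - a1*l1 - k) + c2*b3*(1+l1) + c2*x1*(b3+l1-a4) = 0)
    (hE2 : b3*(l2^2 - a1*l2 - k) + c2*b3*(1+l2) + c2*x2*(b3+l2-a4) = 0)
    (hE3 : b3*(l3^2 - a1*l3 - k) + c2*b3*(1+l3) + c2*x3*(b3+l3-a4) = 0)
    (hE4 : b3*(l4^2 - a1*l4 - k) + c2*b3*(1+l4) + c2*x4*(b3+l4-a4) = 0)
    (hC1 : c3*(l1-a4)*x1 + (l1-a2)*(b3*(1+l1+x1)+(l1-a4)*x1) + b1*b3*l1 = 0)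
    (hC2 : c3*(l2-a4)*x2 + (l2-a2)*(b3*(1+l2+x2)+(l2-a4)*x2) + b1*b3*l2 = 0)
    (hC3 : c3*(l3-a4)*x3 + (l3-a2)*(b3*(1+l3+x3)+(l3-a4)*x3) + b1*b3*l3 = 0)
    (hC4 : c3*(l4-a4)*x4 + (l4-a2)*(b3*(1+l4+x4)+(l4-a4)*x4) + b1*b3*l4 = 0)
    (hD1 : (l1-a3)*(l1-a4)*x1 + b2*b3*(1+l1+x1) + b2*(l1-a4)*x1 - c4*b3*x1 = 0)
    (hD2 : (l2-a3)*(l2-a4)*x2 + b2*b3*(1+l2+x2) + b2*(l2-a4)*x2 - c4*b3*x2 = 0)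
    (hD3 : (l3-a3)*(l3-a4)*x3 + b2*b3*(1+l3+x3) + b2*(l3-a4)*x3 - c4*b3*x3 = 0)
    (hD4 : (l4-a3)*(l4-a4)*x4 + b2*b3*(1+l4+x4) + b2*(l4-a4)*x4 - c4*b3*x4 = 0)
    (hq1 : x1^2 = (ll-mu)*x1 + (k4-mu)) (hq2 : x2^2 = (ll-mu)*x2 + (k4-mu))
    (hq3 : x3^2 = (ll-mu)*x3 + (k4-mu)) (hq4 : x4^2 = (ll-mu)*x4 + (k4-mu))
    (hk4 : c2*c3*c4*k4 = k*b1*b2*b3) :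
    (a4 = 0 → l1 + l3 = a1) ∧ (l1 + l3 = a1 → mu = 0) := by
  have hne12 : l1 ≠ l2 := ne_of_gt h12
  have hne13 : l1 ≠ l3 := ne_of_gt (h23.trans h12)
  have hne14 : l1 ≠ l4 := ne_of_gt ((h34.trans h23).trans h12)
  have hne23 : l2 ≠ l3 := ne_of_gt h23
  have hne24 : l2 ≠ l4 := ne_of_gt (h34.trans h23)
  have hne34 : l3 ≠ l4 := ne_of_gt h34
  -- Pigeonhole: the x-values pair up as {1,3} and {2,4}
  have main : x1 = x3 ∧ x2 = x4 ∧ x1 ≠ x2 := by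
    rcases val_three hq1 hq2 hq3 with hx | hx | hx
    · -- x1 = x2 : claim the classes are {1,2},{3,4}, then contradiction
      exfalso
      have hE2' : b3*(l2^2 - a1*l2 - k) + c2*b3*(1+l2) + c2*x1*(b3+l2-a4) = 0 := by
        rw [hx]; exact hE2
      have h34x : x3 = x4 := by
        rcases val_three hq3 hq4 hq1 with h | h | h
        · exact h
        · rw [h] at hE3; exact absurd (three_E hb3 hE1 hE2' hE3 hne12 hne13 hne23) id
        · rw [h] at hE4; exact absurd (three_E hb3 hE1 hE2' hE4 hne12 hne14 hne24) id
      have hnex : x1 ≠ x3 := by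
        intro h
        rw [← h] at hE3
        exact three_E hb3 hE1 hE2' hE3 hne12 hne13 hne23
      have hE4' : b3*(l4^2 - a1*l4 - k) + c2*b3*(1+l4) + c2*x3*(b3+l4-a4) = 0 := by
        rw [h34x]; exact hE4
      have hC2' : c3*(l2-a4)*x1 + (l2-a2)*(b3*(1+l2+x1)+(l2-a4)*x1) + b1*b3*l2 = 0 := by
        rw [hx]; exact hC2
      have hD2' : (l2-a3)*(l2-a4)*x1 + b2*b3*(1+l2+x1) + b2*(l2-a4)*x1 - c4*b3*x1 = 0 := by
        rw [hx]; exact hD2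
      have hC4' : c3*(l4-a4)*x3 + (l4-a2)*(b3*(1+l4+x3)+(l4-a4)*x3) + b1*b3*l4 = 0 := by
        rw [h34x]; exact hC4
      have hD4' : (l4-a3)*(l4-a4)*x3 + b2*b3*(1+l4+x3) + b2*(l4-a4)*x3 - c4*b3*x3 = 0 := by
        rw [h34x]; exact hD4
      obtain ⟨hM1, -, -, -⟩ := master hb2 hb3 hc2 hne12 hne34 hnex
        hE1 hE2' hC1 hC2' hD1 hD2' hE3 hE4' hC3 hC4' hD3 hD4'
      obtain ⟨hVa, hVb⟩ := vieta_E hne12 hE1 hE2'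
      obtain ⟨hVc, hVd⟩ := vieta_E hne34 hE3 hE4'
      have s1 := sep_E hb3 hb1 hK1 hM1 h12 hVa hVb
      have s2 := sep_E hb3 hb1 hK1 hM1 h34 hVc hVd
      linarith [s1.1, s2.2]
    · -- x1 = x3 : the good case
      have hE3' : b3*(l3^2 - a1*l3 - k) + c2*b3*(1+l3) + c2*x1*(b3+l3-a4) = 0 := by
        rw [hx]; exact hE3
      have h24x : x2 = x4 := by
        rcases val_three hq2 hq4 hq1 with h | h | h
        · exact h
        · rw [h] at hE2; exact absurd (three_E hb3 hE1 hE3' hE2 hne13 hne12 hne23.symm) id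
        · rw [h] at hE4; exact absurd (three_E hb3 hE1 hE3' hE4 hne13 hne14 hne34) id
      have hnex : x1 ≠ x2 := by
        intro h
        rw [← h] at hE2
        exact three_E hb3 hE1 hE3' hE2 hne13 hne12 hne23.symm
      exact ⟨hx, h24x, hnex⟩
    · -- x2 = x3 : classes are {1,4},{2,3}, contradiction via cross-evaluation
      exfalso
      have hE3' : b3*(l3^2 - a1*l3 - k) + c2*b3*(1+l3) + c2*x2*(b3+l3-a4) = 0 := by
        rw [hx]; exact hE3
      have h14x : x1 = x4 := by
        rcases val_three hq1 hq4 hq2 with h | h | h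
        · exact h
        · rw [h] at hE1; exact absurd (three_E hb3 hE2 hE3' hE1 hne23 hne12.symm hne13.symm) id
        · rw [h] at hE4; exact absurd (three_E hb3 hE2 hE3' hE4 hne23 hne24 hne34) id
      have hnex : x1 ≠ x2 := by
        intro h
        rw [h] at hE1
        exact three_E hb3 hE2 hE3' hE1 hne23 hne12.symm hne13.symm
      have hE4' : b3*(l4^2 - a1*l4 - k) + c2*b3*(1+l4) + c2*x1*(b3+l4-a4) = 0 := by
        rw [h14x]; exact hE4
      have hC3' : c3*(l3-a4)*x2 + (l3-a2)*(b3*(1+l3+x2)+(l3-a4)*x2) + b1*b3*l3 = 0 := by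
        rw [hx]; exact hC3
      have hD3' : (l3-a3)*(l3-a4)*x2 + b2*b3*(1+l3+x2) + b2*(l3-a4)*x2 - c4*b3*x2 = 0 := by
        rw [hx]; exact hD3
      have hC4' : c3*(l4-a4)*x1 + (l4-a2)*(b3*(1+l4+x1)+(l4-a4)*x1) + b1*b3*l4 = 0 := by
        rw [h14x]; exact hC4
      have hD4' : (l4-a3)*(l4-a4)*x1 + b2*b3*(1+l4+x1) + b2*(l4-a4)*x1 - c4*b3*x1 = 0 := by
        rw [h14x]; exact hD4
      obtain ⟨hM1, -, -, -⟩ := master hb2 hb3 hc2 hne14 hne23 hnex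
        hE1 hE4' hC1 hC4' hD1 hD4' hE2 hE3' hC2 hC3' hD2 hD3'
      obtain ⟨hVa, hVb⟩ := vieta_E hne14 hE1 hE4'
      obtain ⟨hVc, hVd⟩ := vieta_E hne23 hE2 hE3'
      have s1 := sep_E hb3 hb1 hK1 hM1 ((h34.trans h23).trans h12) hVa hVb
      have s2 := sep_E hb3 hb1 hK1 hM1 h23 hVc hVd
      rcases lt_trichotomy x1 x2 with hlt | heq | hgt
      · -- evaluate class {1,4} at l3 (which carries value x2)
        have hc : b3*((l3-l1)*(l3-l4)) = c2*((x1-x2)*(l3+1)) := by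
          have := cross_E hVa hVb hE3' hM1
          linear_combination this
        have hL : b3*((l3-l1)*(l3-l4)) < 0 :=
          mul_neg_of_pos_of_neg hb3 (mul_neg_of_neg_of_pos (by linarith) (by linarith))
        have hR : 0 < c2*((x1-x2)*(l3+1)) :=
          mul_pos hc2 (mul_pos_of_neg_of_neg (by linarith) (by linarith [s2.1]))
        linarith
      · exact hnex heq
      · -- evaluate class {2,3} at l1 (which carries value x1)
        have hc : b3*((l1-l2)*(l1-l3)) = c2*((x2-x1)*(l1+1)) := by
          have := cross_E hVc hVd hE1 hM1
          linear_combination this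
        have hL : 0 < b3*((l1-l2)*(l1-l3)) :=
          mul_pos hb3 (mul_pos (by linarith) (by linarith))
        have hR : c2*((x2-x1)*(l1+1)) < 0 :=
          mul_neg_of_pos_of_neg hc2 (mul_neg_of_neg_of_pos (by linarith) (by linarith [s1.2]))
        linarith
  obtain ⟨h13x, h24x, hnex⟩ := main
  -- rewrite everything to the two class values x1 (class {1,3}) and x2 (class {2,4})
  rw [← h13x] at hE3 hC3 hD3
  rw [← h24x] at hE4 hC4 hD4
  obtain ⟨hM1, hM2, hMP, hMS⟩ := master hb2 hb3 hc2 hne13 hne24 hnex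
    hE1 hE3 hC1 hC3 hD1 hD3 hE2 hE4 hC2 hC4 hD2 hD4
  obtain ⟨hVa, hVb⟩ := vieta_E hne13 hE1 hE3
  obtain ⟨hVc, hVd⟩ := vieta_E hne24 hE2 hE4
  have s1 := sep_E hb3 hb1 hK1 hM1 (h23.trans h12) hVa hVb
  have s2 := sep_E hb3 hb1 hK1 hM1 (h34.trans h23) hVc hVd
  -- x1 < x2
  have hxlt : x1 < x2 := by
    rcases lt_trichotomy x1 x2 with hlt | heq | hgt
    · exact hlt
    · exact absurd heq hnex
    · exfalso
      have hc : b3*((l1-l2)*(l1-l4)) = c2*((x2-x1)*(l1+1)) := by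
        have := cross_E hVc hVd hE1 hM1
        linear_combination this
      have hL : 0 < b3*((l1-l2)*(l1-l4)) :=
        mul_pos hb3 (mul_pos (by linarith) (by linarith))
      have hR : c2*((x2-x1)*(l1+1)) < 0 :=
        mul_neg_of_pos_of_neg hc2 (mul_neg_of_neg_of_pos (by linarith) (by linarith [s1.2]))
      linarith
  constructor
  · -- a4 = 0 → l1 + l3 = a1
    intro ha4
    have hb3e : b3 = 1 := by rw [hM1, ha4]; norm_num
    have hc3e : c3 = b1 := by
      have h := hM2; rw [hb3e] at h; linarith
    have ha3 : a3 = a1 := by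
      rw [hb3e, hc3e] at hK3; linarith
    have h0 : c2*((1+x1)*(1+x2)) = 0 := by
      rw [hb3e] at hMP hMS
      linear_combination hMS + hMP - ha3 - ha4
    rcases mul_eq_zero.mp h0 with h' | h'
    · exact absurd h' (ne_of_gt hc2)
    rcases mul_eq_zero.mp h' with h'' | h''
    · -- x1 = -1
      have hx1 : x1 = -1 := by linarith
      rw [hb3e, hx1] at hVa
      linarith [hVa]
    · -- x2 = -1 : impossible since x1 < x2 and c2*x1*x2 < 0
      exfalso
      have hx2 : x2 = -1 := by linarith
      rw [hb3e, hx2] at hMP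
      have hcx : c2*x1 = b2 := by linear_combination -hMP
      have : c2*x1 < 0 := mul_neg_of_pos_of_neg hc2 (by linarith)
      linarith
  · -- l1 + l3 = a1 → mu = 0
    intro hsum
    -- x1 = -b3
    have hx1 : x1 = -b3 := by
      rw [hsum] at hVa
      have h0 : c2*(x1 + b3) = 0 := by linear_combination hVa
      rcases mul_eq_zero.mp h0 with h' | h'
      · exact absurd h' (ne_of_gt hc2)
      · linarith
    -- c2*x2 = b2*b3
    have hx2 : c2*x2 = b2*b3 := by
      have h0 : b3*(c2*x2 - b2*b3) = 0 := by
        rw [hx1] at hMP; linear_combination -hMP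
      rcases mul_eq_zero.mp h0 with h' | h'
      · exact absurd h' (ne_of_gt hb3)
      · linarith
    -- a1 = a3 + a4
    have ha134 : b3*(a1 - a3 - a4) = 0 := by
      rw [hx1] at hMS
      linear_combination -hMS + hx2
    have ha134' : a1 = a3 + a4 := by
      rcases mul_eq_zero.mp ha134 with h' | h'
      · exact absurd h' (ne_of_gt hb3)
      · linarith
    -- b3 = 1
    have hb3e : b3 = 1 := by
      have h0 : c3*(b3 - 1) = 0 := by
        linear_combination hM2 + hK3 - ha134' + hM1
      rcases mul_eq_zero.mp h0 with h' | h'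
      · exact absurd h' (ne_of_gt hc3)
      · linarith
    have ha4 : a4 = 0 := by rw [hb3e] at hM1; linarith
    have hc4e : c4 = k := by rw [ha4] at hK4; linarith
    have hb1e : b1 = c3 := by
      have h := hM2; rw [hb3e] at h; linarith
    -- x1*x2 = mu - k4
    have hqv := quad_two (A := (1:ℝ)) (B := -(ll-mu)) (C := -(k4-mu))
      (by linear_combination hq1) (by linear_combination hq2) hnex
    have hprod : x1*x2 = mu - k4 := by linear_combination hqv.2
    -- c2*k4 = b2
    have hck : k*c3*(c2*k4 - b2) = 0 := by
      rw [hc4e, hb1e, hb3e] at hk4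
      linear_combination hk4
    have hck' : c2*k4 = b2 := by
      rcases mul_eq_zero.mp hck with h' | h'
      · rcases mul_eq_zero.mp h' with h'' | h''
        · exact absurd h'' (ne_of_gt hk)
        · exact absurd h'' (ne_of_gt hc3)
      · linarith
    -- finish
    have hfin : c2*mu = 0 := by
      rw [hb3e] at hMP
      rw [hprod] at hMP
      linear_combination hMP + hck'
    rcases mul_eq_zero.mp hfin with h' | h'
    · exact absurd h' (ne_of_gt hc2)
    · exact h'

end Aux

section Graph

open Finset SimpleGraph Matrix

variable {V : Type*} [Fintype V] [DecidableEq V] {G : SimpleGraph V}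

/-- Sum of `f` over the vertices at distance `j` from `u`. -/
noncomputable def distSum (G : SimpleGraph V) (j : ℕ) (f : V → ℝ) (u : V) : ℝ :=
  ∑ w ∈ Finset.univ.filter (fun w => G.dist u w = j), f w

lemma distSum_zero (hconn : G.Connected) (f : V → ℝ) (u : V) :
    distSum G 0 f u = f u := by
  unfold distSum
  have h : Finset.univ.filter (fun w => G.dist u w = 0) = {u} := by
    ext w
    simp only [Finset.mem_filter, Finset.mem_univ, true_and, Finset.mem_singleton,
      hconn.dist_eq_zero_iff]
    exact eq_comm
  rw [h, Finset.sum_singleton]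

lemma distSum_one (f : V → ℝ) (u : V) :
    distSum G 1 f u = ∑ w ∈ G.neighborFinset u, f w := by
  unfold distSum
  congr 1
  rw [neighborFinset_eq_filter]
  apply Finset.filter_congr
  intro w _
  simp [SimpleGraph.dist_eq_one_iff_adj]

lemma distSum_five (hdiam : ∀ u v : V, G.dist u v ≤ 4) (f : V → ℝ) (u : V) :
    distSum G 5 f u = 0 := by
  unfold distSum
  rw [Finset.filter_false_of_mem, Finset.sum_empty]
  intro w _
  have := hdiam u w
  omega

lemma distSum_partition (hdiam : ∀ u v : V, G.dist u v ≤ 4) (f : V → ℝ) (u : V) :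
    ∑ j ∈ Finset.range 5, distSum G j f u = ∑ z, f z := by
  unfold distSum
  rw [show ∑ j ∈ Finset.range 5, ∑ w ∈ Finset.univ.filter (fun w => G.dist u w = j), f w
      = ∑ j ∈ Finset.range 5, ∑ w ∈ Finset.univ, if G.dist u w = j then f w else 0 by
    refine Finset.sum_congr rfl fun j _ => ?_
    rw [Finset.sum_filter], Finset.sum_comm]
  refine Finset.sum_congr rfl fun w _ => ?_
  rw [Finset.sum_ite_eq (Finset.range 5) (G.dist u w) (fun _ => f w)]
  rw [if_pos (Finset.mem_range.mpr (by have := hdiam u w; omega))]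

lemma count_dist {c a b : ℕ → ℕ} (hconn : G.Connected) (hdiam : ∀ u v : V, G.dist u v ≤ 4)
    (hdrg : G.IsDistRegular 4 c a b) {j : ℕ} (hj1 : 1 ≤ j) (hj4 : j ≤ 4) (u z : V) :
    ((G.neighborFinset u).filter (fun w => G.dist z w = j)).card
      = (if G.dist u z = j - 1 then b (j-1) else 0)
        + (if G.dist u z = j then a j else 0)
        + (if G.dist u z = j + 1 then c (j+1) else 0) := by
  by_cases h1 : G.dist u z = j - 1
  · rw [if_pos h1, if_neg (by omega), if_neg (by omega)]
    have hd : G.dist z u = j - 1 := by rw [SimpleGraph.dist_comm]; exact h1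
    have hcount := (hdrg (j-1) (by omega) z u hd).2.2
    simp only [show j - 1 + 1 = j from by omega] at hcount
    omega
  · by_cases h2 : G.dist u z = j
    · rw [if_neg h1, if_pos h2, if_neg (by omega)]
      have hd : G.dist z u = j := by rw [SimpleGraph.dist_comm]; exact h2
      have hcount := (hdrg j (by omega) z u hd).2.1
      omega
    · by_cases h3 : G.dist u z = j + 1
      · rw [if_neg h1, if_neg h2, if_pos h3]
        have hj5 : j + 1 ≤ 4 := by have := hdiam u z; omega
        have hd : G.dist z u = j + 1 := by rw [SimpleGraph.dist_comm]; exact h3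
        have hcount := (hdrg (j+1) hj5 z u hd).1
        simp only [show j + 1 - 1 = j from by omega] at hcount
        omega
      · rw [if_neg h1, if_neg h2, if_neg h3]
        rw [Finset.filter_false_of_mem, Finset.card_empty]
        intro w hw hdzw
        have hadj : G.Adj u w := (SimpleGraph.mem_neighborFinset G u w).mp hw
        have huw : G.dist u w = 1 := SimpleGraph.dist_eq_one_iff_adj.mpr hadj
        have hwu : G.dist w u = 1 := by rw [SimpleGraph.dist_comm]; exact huw
        have t1 : G.dist z u ≤ G.dist z w + G.dist w u := hconn.dist_triangle
        have t2 : G.dist z w ≤ G.dist z u + G.dist u w := hconn.dist_triangle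
        have hc : G.dist u z = G.dist z u := SimpleGraph.dist_comm
        omega

private lemma ite_sum_helper (C : ℝ) (p : V → Prop) [DecidablePred p] (f : V → ℝ) :
    ∑ z, (if p z then C else 0) * f z = C * ∑ z ∈ Finset.univ.filter p, f z := by
  rw [Finset.mul_sum, Finset.sum_filter]
  refine Finset.sum_congr rfl fun z _ => ?_
  split_ifs <;> ring

lemma step_lemma {c a b : ℕ → ℕ} (hconn : G.Connected) (hdiam : ∀ u v : V, G.dist u v ≤ 4)
    (hdrg : G.IsDistRegular 4 c a b) {j : ℕ} (hj1 : 1 ≤ j) (hj4 : j ≤ 4) (f : V → ℝ) (u : V) :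
    ∑ w ∈ G.neighborFinset u, distSum G j f w
      = (b (j-1) : ℝ) * distSum G (j-1) f u + (a j : ℝ) * distSum G j f u
        + (c (j+1) : ℝ) * distSum G (j+1) f u := by
  unfold distSum
  calc ∑ w ∈ G.neighborFinset u, ∑ z ∈ Finset.univ.filter (fun z => G.dist w z = j), f z
      = ∑ w ∈ G.neighborFinset u, ∑ z ∈ Finset.univ, if G.dist w z = j then f z else 0 := by
        refine Finset.sum_congr rfl fun w _ => ?_
        rw [Finset.sum_filter]
    _ = ∑ z ∈ Finset.univ, ∑ w ∈ G.neighborFinset u, if G.dist w z = j then f z else 0 :=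
        Finset.sum_comm
    _ = ∑ z ∈ Finset.univ,
          (((G.neighborFinset u).filter (fun w => G.dist z w = j)).card : ℝ) * f z := by
        refine Finset.sum_congr rfl fun z _ => ?_
        have hpred : (G.neighborFinset u).filter (fun w => G.dist w z = j)
            = (G.neighborFinset u).filter (fun w => G.dist z w = j) := by
          apply Finset.filter_congr
          intro w _
          rw [SimpleGraph.dist_comm]
        rw [← Finset.sum_filter, hpred, Finset.sum_const, nsmul_eq_mul]
    _ = ∑ z ∈ Finset.univ,
          ((if G.dist u z = j-1 then (b (j-1) : ℝ) else 0) * f z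
            + (if G.dist u z = j then (a j : ℝ) else 0) * f z
            + (if G.dist u z = j+1 then (c (j+1) : ℝ) else 0) * f z) := by
        refine Finset.sum_congr rfl fun z _ => ?_
        rw [count_dist hconn hdiam hdrg hj1 hj4 u z]
        push_cast [apply_ite (Nat.cast : ℕ → ℝ)]
        ring
    _ = (b (j-1) : ℝ) * ∑ z ∈ Finset.univ.filter (fun w => G.dist u w = j-1), f z
        + (a j : ℝ) * ∑ z ∈ Finset.univ.filter (fun w => G.dist u w = j), f z
        + (c (j+1) : ℝ) * ∑ z ∈ Finset.univ.filter (fun w => G.dist u w = j+1), f z := by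
        rw [Finset.sum_add_distrib, Finset.sum_add_distrib,
          ite_sum_helper, ite_sum_helper, ite_sum_helper]

end Graph


section Spectral

open Finset SimpleGraph Matrix

variable {V : Type*} [Fintype V] [DecidableEq V] {G : SimpleGraph V}

lemma sum_eigen_zero {k : ℕ} (hreg : G.IsRegularOfDegree k) {lam : ℝ} {v : V → ℝ}
    (hv : G.adjMatrix ℝ *ᵥ v = lam • v) (hlam : lam ≠ (k : ℝ)) : ∑ z, v z = 0 := by
  have h1 : ∑ u, (G.adjMatrix ℝ *ᵥ v) u = lam * ∑ z, v z := by
    rw [hv]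
    simp [Finset.mul_sum]
  have h2 : ∑ u, (G.adjMatrix ℝ *ᵥ v) u = (k : ℝ) * ∑ z, v z := by
    calc ∑ u, (G.adjMatrix ℝ *ᵥ v) u = ∑ u, ∑ w ∈ G.neighborFinset u, v w := by
          refine Finset.sum_congr rfl fun u _ => ?_
          rw [adjMatrix_mulVec_apply]
      _ = ∑ u : V, ∑ w : V, if G.Adj u w then v w else 0 := by
          refine Finset.sum_congr rfl fun u _ => ?_
          rw [neighborFinset_eq_filter, Finset.sum_filter]
      _ = ∑ w : V, ∑ u : V, if G.Adj u w then v w else 0 := Finset.sum_comm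
      _ = ∑ w : V, (k : ℝ) * v w := by
          refine Finset.sum_congr rfl fun w _ => ?_
          rw [← Finset.sum_filter, Finset.sum_const, nsmul_eq_mul]
          congr 1
          have : Finset.univ.filter (fun u => G.Adj u w) = G.neighborFinset w := by
            rw [neighborFinset_eq_filter]
            apply Finset.filter_congr
            intro u _
            simp [adj_comm]
          rw [this, card_neighborFinset_eq_degree, hreg w]
      _ = (k : ℝ) * ∑ z, v z := by rw [Finset.mul_sum]
  have h3 : (lam - (k : ℝ)) * ∑ z, v z = 0 := by linarith
  rcases mul_eq_zero.mp h3 with h | h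
  · exact absurd (by linarith : lam = (k:ℝ)) hlam
  · exact h

lemma eigen_package {c a b : ℕ → ℕ} {k : ℕ} (hconn : G.Connected)
    (hdiam : ∀ u v : V, G.dist u v ≤ 4) (hdrg : G.IsDistRegular 4 c a b)
    (hb0 : b 0 = k)
    (hc2 : 0 < c 2) (hc3 : 0 < c 3) (hc4 : 0 < c 4)
    {lam : ℝ} {v : V → ℝ} (hv : G.adjMatrix ℝ *ᵥ v = lam • v) :
    ∃ P2 P3 P4 : ℝ,
      ((c 2 : ℝ) * P2 = lam^2 - (a 1 : ℝ)*lam - (k : ℝ)) ∧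
      ((c 3 : ℝ) * P3 = (lam - (a 2 : ℝ))*P2 - (b 1 : ℝ)*lam) ∧
      ((c 4 : ℝ) * P4 = (lam - (a 3 : ℝ))*P3 - (b 2 : ℝ)*P2) ∧
      (∀ u, distSum G 2 v u = P2 * v u) ∧
      (∀ u, distSum G 3 v u = P3 * v u) ∧
      (∀ u, distSum G 4 v u = P4 * v u) ∧
      (∀ u, lam * (P4 * v u) = (b 3 : ℝ) * (P3 * v u) + (a 4 : ℝ) * (P4 * v u)) := by
  have hc2r : (0:ℝ) < (c 2 : ℝ) := by exact_mod_cast hc2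
  have hc3r : (0:ℝ) < (c 3 : ℝ) := by exact_mod_cast hc3
  have hc4r : (0:ℝ) < (c 4 : ℝ) := by exact_mod_cast hc4
  have hA : ∀ u, ∑ w ∈ G.neighborFinset u, v w = lam * v u := by
    intro u
    have h := congrFun hv u
    rw [adjMatrix_mulVec_apply] at h
    simpa using h
  have hS0 : ∀ u, distSum G 0 v u = v u := distSum_zero hconn v
  have hS1 : ∀ u, distSum G 1 v u = lam * v u := by
    intro u; rw [distSum_one]; exact hA u
  -- step j = 1 : compute distSum 2
  set P2 : ℝ := (lam^2 - (a 1 : ℝ)*lam - (k : ℝ)) / (c 2 : ℝ) with hP2def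
  have hS2 : ∀ u, distSum G 2 v u = P2 * v u := by
    intro u
    have hs := step_lemma hconn hdiam hdrg (le_refl 1) (by norm_num) v u
    norm_num at hs
    rw [hS0, hS1] at hs
    have hlhs : ∑ w ∈ G.neighborFinset u, distSum G 1 v w = lam * (lam * v u) := by
      calc ∑ w ∈ G.neighborFinset u, distSum G 1 v w
          = ∑ w ∈ G.neighborFinset u, lam * v w := Finset.sum_congr rfl fun w _ => hS1 w
        _ = lam * ∑ w ∈ G.neighborFinset u, v w := by rw [Finset.mul_sum]
        _ = lam * (lam * v u) := by rw [hA u]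
    rw [hlhs] at hs
    rw [hP2def]
    field_simp
    have hb0r : (b 0 : ℝ) = (k : ℝ) := by exact_mod_cast hb0
    linear_combination (-1) * hs - v u * hb0r
  have hS3 : ∀ u, distSum G 3 v u = (((lam - (a 2 : ℝ))*P2 - (b 1 : ℝ)*lam) / (c 3 : ℝ)) * v u := by
    intro u
    have hs := step_lemma hconn hdiam hdrg (by norm_num : 1 ≤ 2) (by norm_num) v u
    norm_num at hs
    rw [hS1, hS2] at hs
    have hlhs : ∑ w ∈ G.neighborFinset u, distSum G 2 v w = P2 * (lam * v u) := by
      calc ∑ w ∈ G.neighborFinset u, distSum G 2 v w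
          = ∑ w ∈ G.neighborFinset u, P2 * v w := Finset.sum_congr rfl fun w _ => hS2 w
        _ = P2 * ∑ w ∈ G.neighborFinset u, v w := by rw [Finset.mul_sum]
        _ = P2 * (lam * v u) := by rw [hA u]
    rw [hlhs] at hs
    field_simp
    linear_combination -hs
  set P3 : ℝ := ((lam - (a 2 : ℝ))*P2 - (b 1 : ℝ)*lam) / (c 3 : ℝ) with hP3def
  have hS4 : ∀ u, distSum G 4 v u = (((lam - (a 3 : ℝ))*P3 - (b 2 : ℝ)*P2) / (c 4 : ℝ)) * v u := by
    intro u
    have hs := step_lemma hconn hdiam hdrg (by norm_num : 1 ≤ 3) (by norm_num) v u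
    norm_num at hs
    rw [hS2, hS3] at hs
    have hlhs : ∑ w ∈ G.neighborFinset u, distSum G 3 v w = P3 * (lam * v u) := by
      calc ∑ w ∈ G.neighborFinset u, distSum G 3 v w
          = ∑ w ∈ G.neighborFinset u, P3 * v w := Finset.sum_congr rfl fun w _ => hS3 w
        _ = P3 * ∑ w ∈ G.neighborFinset u, v w := by rw [Finset.mul_sum]
        _ = P3 * (lam * v u) := by rw [hA u]
    rw [hlhs] at hs
    field_simp
    linear_combination -hs
  set P4 : ℝ := ((lam - (a 3 : ℝ))*P3 - (b 2 : ℝ)*P2) / (c 4 : ℝ) with hP4def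
  refine ⟨P2, P3, P4, ?_, ?_, ?_, hS2, hS3, hS4, ?_⟩
  · rw [hP2def]; field_simp
  · rw [hP3def]; field_simp
  · rw [hP4def]; field_simp
  · -- step j = 4
    intro u
    have hs := step_lemma hconn hdiam hdrg (by norm_num : 1 ≤ 4) (le_refl 4) v u
    norm_num at hs
    rw [hS3, hS4, distSum_five hdiam] at hs
    have hlhs : ∑ w ∈ G.neighborFinset u, distSum G 4 v w = P4 * (lam * v u) := by
      calc ∑ w ∈ G.neighborFinset u, distSum G 4 v w
          = ∑ w ∈ G.neighborFinset u, P4 * v w := Finset.sum_congr rfl fun w _ => hS4 w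
        _ = P4 * ∑ w ∈ G.neighborFinset u, v w := by rw [Finset.mul_sum]
        _ = P4 * (lam * v u) := by rw [hA u]
    rw [hlhs] at hs
    linear_combination hs

end Spectral


section MoreAux

open Finset SimpleGraph Matrix

variable {V : Type*} [Fintype V] [DecidableEq V] {G : SimpleGraph V}

/-- Predecessor on a geodesic. -/
lemma exists_pred (hconn : G.Connected) {u v : V} {i : ℕ} (h : G.dist u v = i + 1) :
    ∃ w, G.Adj w v ∧ G.dist u w = i := by
  obtain ⟨p, hp⟩ := hconn.exists_walk_length_eq_dist u v
  cases hq : p.reverse with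
  | nil =>
    exfalso
    have := congrArg SimpleGraph.Walk.length hq
    rw [SimpleGraph.Walk.length_reverse, hp, h] at this
    simp at this
  | cons hadj q =>
    rename_i w
    refine ⟨w, hadj.symm, ?_⟩
    have hlq : q.length = i := by
      have := congrArg SimpleGraph.Walk.length hq
      rw [SimpleGraph.Walk.length_reverse, hp, h] at this
      simp at this
      omega
    have hle : G.dist u w ≤ i := by
      have hd := SimpleGraph.dist_le q.reverse
      rw [SimpleGraph.Walk.length_reverse, hlq] at hd
      exact hd
    have hwv : G.dist w v = 1 := SimpleGraph.dist_eq_one_iff_adj.mpr hadj.symm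
    have t : G.dist u v ≤ G.dist u w + G.dist w v := hconn.dist_triangle
    omega

/-- The three distance filters partition the neighborhood. -/
lemma partition_k {c a b : ℕ → ℕ} {k : ℕ} (hconn : G.Connected)
    (hreg : G.IsRegularOfDegree k) (hdrg : G.IsDistRegular 4 c a b)
    {i : ℕ} (hi1 : 1 ≤ i) (hi4 : i ≤ 4) {u v : V} (hd : G.dist u v = i) :
    c i + a i + b i = k := by
  obtain ⟨hc, ha, hb⟩ := hdrg i hi4 u v hd
  have hcard : ((G.neighborFinset v).filter (fun w => G.dist u w = i - 1)).card
      + ((G.neighborFinset v).filter (fun w => G.dist u w = i)).card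
      + ((G.neighborFinset v).filter (fun w => G.dist u w = i + 1)).card = k := by
    have hsplit : (G.neighborFinset v).card
        = ∑ w ∈ G.neighborFinset v,
            ((if G.dist u w = i - 1 then 1 else 0) + ((if G.dist u w = i then 1 else 0)
              + (if G.dist u w = i + 1 then 1 else 0))) := by
      rw [Finset.card_eq_sum_ones]
      refine Finset.sum_congr rfl fun w hw => ?_
      have hadj : G.Adj v w := (SimpleGraph.mem_neighborFinset G v w).mp hw
      have hvw : G.dist v w = 1 := SimpleGraph.dist_eq_one_iff_adj.mpr hadj
      have hwv : G.dist w v = 1 := by rw [SimpleGraph.dist_comm]; exact hvw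
      have t1 : G.dist u v ≤ G.dist u w + G.dist w v := hconn.dist_triangle
      have t2 : G.dist u w ≤ G.dist u v + G.dist v w := hconn.dist_triangle
      by_cases h1 : G.dist u w = i - 1
      · rw [if_pos h1, if_neg (by omega), if_neg (by omega)]
      · by_cases h2 : G.dist u w = i
        · rw [if_neg h1, if_pos h2, if_neg (by omega)]
        · have h3 : G.dist u w = i + 1 := by omega
          rw [if_neg h1, if_neg h2, if_pos h3]
    rw [Finset.sum_add_distrib, Finset.sum_add_distrib, ← Finset.card_filter,
      ← Finset.card_filter, ← Finset.card_filter] at hsplit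
    rw [card_neighborFinset_eq_degree, hreg v] at hsplit
    omega
  omega

/-- Adjacency in the distance-4 graph is just distance 4. -/
lemma distGraph4_adj (u w : V) : (G.distGraph 4).Adj u w ↔ G.dist u w = 4 := by
  constructor
  · exact fun h => (h : u ≠ w ∧ G.dist u w = 4).2
  · intro h
    refine (⟨?_, h⟩ : u ≠ w ∧ G.dist u w = 4)
    intro he
    rw [he] at h
    rw [SimpleGraph.dist_self] at h
    omega

lemma distGraph4_neighborFinset (u : V) :
    (G.distGraph 4).neighborFinset u = Finset.univ.filter (fun w => G.dist u w = 4) := by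
  ext w
  rw [SimpleGraph.mem_neighborFinset, Finset.mem_filter]
  simp [distGraph4_adj]

lemma distGraph4_mulVec (v : V → ℝ) (u : V) :
    ((G.distGraph 4).adjMatrix ℝ *ᵥ v) u = distSum G 4 v u := by
  rw [adjMatrix_mulVec_apply, distGraph4_neighborFinset]
  rfl

lemma distGraph4_compl_mulVec (v : V → ℝ) (u : V) :
    (((G.distGraph 4)ᶜ).adjMatrix ℝ *ᵥ v) u = (∑ z, v z) - v u - distSum G 4 v u := by
  rw [adjMatrix_mulVec_apply]
  have key : ∀ z, v z = (if z = u then v z else 0) + (if G.dist u z = 4 then v z else 0)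
      + (if ((G.distGraph 4)ᶜ).Adj u z then v z else 0) := by
    intro z
    by_cases h1 : z = u
    · subst h1
      rw [if_pos rfl, if_neg (by rw [SimpleGraph.dist_self]; omega),
        if_neg (fun h => ((G.distGraph 4)ᶜ).loopless.irrefl z h)]
      ring
    · by_cases h2 : G.dist u z = 4
      · rw [if_neg h1, if_pos h2, if_neg ?_]
        · ring
        · rw [SimpleGraph.compl_adj]
          rintro ⟨-, hnadj⟩
          exact hnadj ((distGraph4_adj u z).mpr h2)
      · rw [if_neg h1, if_neg h2, if_pos ?_]
        · ring
        · rw [SimpleGraph.compl_adj]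
          exact ⟨fun h => h1 h.symm, fun h => h2 ((distGraph4_adj u z).mp h)⟩
  have hsum : ∑ z, v z = v u + distSum G 4 v u + ∑ w ∈ ((G.distGraph 4)ᶜ).neighborFinset u, v w := by
    calc ∑ z, v z = ∑ z, ((if z = u then v z else 0) + (if G.dist u z = 4 then v z else 0)
        + (if ((G.distGraph 4)ᶜ).Adj u z then v z else 0)) :=
          Finset.sum_congr rfl fun z _ => key z
      _ = (∑ z, if z = u then v z else 0) + (∑ z, if G.dist u z = 4 then v z else 0)
          + (∑ z, if ((G.distGraph 4)ᶜ).Adj u z then v z else 0) := by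
          rw [Finset.sum_add_distrib, Finset.sum_add_distrib]
      _ = v u + distSum G 4 v u + ∑ w ∈ ((G.distGraph 4)ᶜ).neighborFinset u, v w := by
          congr 1
          · congr 1
            · rw [Finset.sum_ite_eq' Finset.univ u v]
              simp
            · rw [distSum]
              rw [Finset.sum_filter]
          · rw [neighborFinset_eq_filter, Finset.sum_filter]
  linarith [hsum]

end MoreAux


section Antipodal

open Finset SimpleGraph Matrix

variable {V : Type*} [Fintype V] [DecidableEq V] {G : SimpleGraph V}

lemma antipodal_of_mu_zero {n4 k4 l4 : ℕ} (hsrg : (G.distGraph 4).IsSRGWith n4 k4 l4 0) :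
    G.IsAntipodal 4 := by
  constructor
  · exact fun x => Or.inl rfl
  · rintro u v (rfl | h)
    · exact Or.inl rfl
    · exact Or.inr (by rw [SimpleGraph.dist_comm]; exact h)
  · rintro u v w (rfl | huv) (rfl | hvw)
    · exact Or.inl rfl
    · exact Or.inr hvw
    · exact Or.inr huv
    · by_cases hw : u = w
      · exact Or.inl hw
      · refine Or.inr ?_
        by_contra hne
        have hnadj : ¬(G.distGraph 4).Adj u w := fun h => hne (h : u ≠ w ∧ G.dist u w = 4).2
        have hcard := hsrg.of_not_adj hw hnadj
        have : v ∈ (G.distGraph 4).commonNeighbors u w := by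
          constructor
          · exact (distGraph4_adj u v).mpr huv
          · exact (distGraph4_adj w v).mpr (by rw [SimpleGraph.dist_comm]; exact hvw)
        have hempty := Fintype.card_eq_zero_iff.mp hcard
        exact hempty.false ⟨v, this⟩

lemma a4_zero_of_antipodal {c a b : ℕ → ℕ} (hant : G.IsAntipodal 4)
    (hdrg : G.IsDistRegular 4 c a b) {u v : V} (h4 : G.dist u v = 4) : a 4 = 0 := by
  have hcount := (hdrg 4 (le_refl 4) u v h4).2.1
  rw [Finset.filter_false_of_mem, Finset.card_empty] at hcount
  · omega
  · intro w hw hdw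
    have hadj : G.Adj v w := (SimpleGraph.mem_neighborFinset G v w).mp hw
    have hvu : G.dist v u = 4 := by rw [SimpleGraph.dist_comm]; exact h4
    have htr := hant.trans (Or.inr hvu) (Or.inr hdw)
    rcases htr with h | h
    · exact G.loopless.irrefl v (h ▸ hadj)
    · rw [SimpleGraph.dist_eq_one_iff_adj.mpr hadj] at h
      omega

end Antipodal


section SpectralData

open Finset SimpleGraph Matrix

variable {V : Type*} [Fintype V] [DecidableEq V] {G : SimpleGraph V}

lemma spectral_data {c a b : ℕ → ℕ} {k n4 k4 ell mu : ℕ}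
    (hconn : G.Connected) (hdiam : ∀ u v : V, G.dist u v ≤ 4)
    (hdrg : G.IsDistRegular 4 c a b) (hreg : G.IsRegularOfDegree k)
    (hb0 : b 0 = k) (hc2 : 0 < c 2) (hc3 : 0 < c 3) (hc4 : 0 < c 4)
    (hsrg : (G.distGraph 4).IsSRGWith n4 k4 ell mu)
    {lv : ℝ} (hev : Module.End.HasEigenvalue G.adjEnd lv) (hne : lv ≠ (k : ℝ)) :
    ∃ P2 P3 P4 : ℝ,
      (c 2 : ℝ) * P2 = lv^2 - (a 1 : ℝ)*lv - (k : ℝ) ∧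
      (c 3 : ℝ) * P3 = (lv - (a 2 : ℝ))*P2 - (b 1 : ℝ)*lv ∧
      (c 4 : ℝ) * P4 = (lv - (a 3 : ℝ))*P3 - (b 2 : ℝ)*P2 ∧
      1 + lv + P2 + P3 + P4 = 0 ∧
      lv*P4 = (b 3 : ℝ)*P3 + (a 4 : ℝ)*P4 ∧
      P4^2 = ((ell : ℝ) - (mu : ℝ))*P4 + ((k4 : ℝ) - (mu : ℝ)) := by
  obtain ⟨v, hv⟩ := hev.exists_hasEigenvector
  have hvec : G.adjMatrix ℝ *ᵥ v = lv • v := by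
    have h := hv.apply_eq_smul
    rwa [SimpleGraph.adjEnd, Matrix.toLin'_apply] at h
  obtain ⟨u1, hu1⟩ := Function.ne_iff.mp hv.right
  simp only [Pi.zero_apply] at hu1
  obtain ⟨P2, P3, P4, r1, r2, r3, hS2, hS3, hS4, hB⟩ :=
    eigen_package hconn hdiam hdrg hb0 hc2 hc3 hc4 hvec
  have hsum0 : ∑ z, v z = 0 := sum_eigen_zero hreg hvec hne
  have hS0 := distSum_zero hconn v
  have hS1 : ∀ u, distSum G 1 v u = lv * v u := by
    intro u
    rw [distSum_one]
    have h := congrFun hvec u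
    rw [adjMatrix_mulVec_apply] at h
    simpa using h
  have hH : 1 + lv + P2 + P3 + P4 = 0 := by
    have hpart := distSum_partition hdiam v u1
    rw [hsum0, Finset.sum_range_succ, Finset.sum_range_succ, Finset.sum_range_succ,
      Finset.sum_range_succ, Finset.sum_range_one, hS0 u1, hS1 u1, hS2 u1, hS3 u1,
      hS4 u1] at hpart
    have h0 : (1 + lv + P2 + P3 + P4) * v u1 = 0 := by linear_combination hpart
    rcases mul_eq_zero.mp h0 with h | h
    · exact h
    · exact absurd h hu1
  have hBs : lv*P4 = (b 3 : ℝ)*P3 + (a 4 : ℝ)*P4 := by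
    have h0 : (lv*P4 - ((b 3 : ℝ)*P3 + (a 4 : ℝ)*P4)) * v u1 = 0 := by
      linear_combination hB u1
    rcases mul_eq_zero.mp h0 with h | h
    · linarith
    · exact absurd h hu1
  have hA4v : (G.distGraph 4).adjMatrix ℝ *ᵥ v = P4 • v := by
    funext u
    rw [distGraph4_mulVec, hS4 u]
    simp
  have hQ : P4^2 = ((ell : ℝ) - (mu : ℝ))*P4 + ((k4 : ℝ) - (mu : ℝ)) := by
    have hmat := hsrg.matrix_eq (α := ℝ)
    have happ := congrFun (congrArg (fun M : Matrix V V ℝ => M *ᵥ v) hmat) u1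
    simp only [pow_two, ← Matrix.mulVec_mulVec, hA4v, Matrix.mulVec_smul,
      Matrix.add_mulVec, Matrix.smul_mulVec, Matrix.one_mulVec, Pi.add_apply,
      Pi.smul_apply, smul_eq_mul] at happ
    have hcompl := distGraph4_compl_mulVec (G := G) v u1
    rw [hsum0, hS4 u1] at hcompl
    rw [hcompl] at happ
    simp only [nsmul_eq_mul] at happ
    have h0 : (P4^2 - (((ell : ℝ) - (mu : ℝ))*P4 + ((k4 : ℝ) - (mu : ℝ)))) * v u1 = 0 := by
      linear_combination happ
    rcases mul_eq_zero.mp h0 with h | h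
    · linarith
    · exact absurd h hu1
  exact ⟨P2, P3, P4, r1, r2, r3, hH, hBs, hQ⟩

end SpectralData


open Finset SimpleGraph Matrix

theorem stmt_4 {V : Type*} [Fintype V] [DecidableEq V] (G : SimpleGraph V)
    (n k : ℕ) (c a b : ℕ → ℕ) (lam : Fin 5 → ℝ) (m : Fin 5 → ℕ)
    (hn : Fintype.card V = n)
    (hconn : G.Connected)
    (hreg : G.IsRegularOfDegree k)
    (hdiam : ∀ u v : V, G.dist u v ≤ 4) (hdiam' : ∃ u v : V, G.dist u v = 4)
    (hdrg : G.IsDistRegular 4 c a b)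
    (hspec : G.HasSpectrum lam m)
    (hlam0 : lam 0 = (k : ℝ)) (hm0 : m 0 = 1)
    (hsdrg : G.IsStronglyDRG 4) :
    G.IsAntipodal 4 ↔ lam 1 + lam 3 = (a 1 : ℝ) := by
  classical
  obtain ⟨n4, k4, ell, mu, hsrg⟩ := hsdrg
  obtain ⟨u0, v0, h4⟩ := hdiam'
  -- geodesic chain u0 - z1 - z2 - z3 - v0
  obtain ⟨z3, hz3adj, hz3⟩ := exists_pred hconn (show G.dist u0 v0 = 3 + 1 from h4)
  obtain ⟨z2, hz2adj, hz2⟩ := exists_pred hconn (show G.dist u0 z3 = 2 + 1 from hz3)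
  obtain ⟨z1, hz1adj, hz1⟩ := exists_pred hconn (show G.dist u0 z2 = 1 + 1 from hz2)
  obtain ⟨z0, hz0adj, hz0⟩ := exists_pred hconn (show G.dist u0 z1 = 0 + 1 from hz1)
  have hz0e : z0 = u0 := ((hconn.dist_eq_zero_iff).mp hz0).symm
  rw [hz0e] at hz0adj
  -- b 0 = k
  have hb0 : b 0 = k := by
    have h := (hdrg 0 (by norm_num) u0 u0 (SimpleGraph.dist_self : G.dist u0 u0 = 0)).2.2
    rw [Finset.filter_true_of_mem, card_neighborFinset_eq_degree, hreg u0] at h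
    · omega
    · intro w hw
      simp only [zero_add]
      exact SimpleGraph.dist_eq_one_iff_adj.mpr ((SimpleGraph.mem_neighborFinset G u0 w).mp hw)
  -- c 1 = 1
  have hc1 : c 1 = 1 := by
    have h := (hdrg 1 (by norm_num) u0 z1 hz1).1
    have hfil : (G.neighborFinset z1).filter (fun w => G.dist u0 w = 1 - 1) = {u0} := by
      ext w
      simp only [Finset.mem_filter, Finset.mem_singleton, SimpleGraph.mem_neighborFinset]
      constructor
      · rintro ⟨-, hd⟩
        exact ((hconn.dist_eq_zero_iff).mp hd).symm
      · rintro rfl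
        exact ⟨hz0adj.symm, (hconn.dist_eq_zero_iff).mpr rfl⟩
    rw [hfil, Finset.card_singleton] at h
    omega
  -- positivity of intersection numbers
  have hc2 : 0 < c 2 := by
    have h := (hdrg 2 (by norm_num) u0 z2 hz2).1
    rw [← h]
    refine Finset.card_pos.mpr ⟨z1, Finset.mem_filter.mpr ⟨?_, hz1⟩⟩
    exact (SimpleGraph.mem_neighborFinset G z2 z1).mpr hz1adj.symm
  have hc3 : 0 < c 3 := by
    have h := (hdrg 3 (by norm_num) u0 z3 hz3).1
    rw [← h]
    refine Finset.card_pos.mpr ⟨z2, Finset.mem_filter.mpr ⟨?_, hz2⟩⟩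
    exact (SimpleGraph.mem_neighborFinset G z3 z2).mpr hz2adj.symm
  have hc4 : 0 < c 4 := by
    have h := (hdrg 4 (le_refl 4) u0 v0 h4).1
    rw [← h]
    refine Finset.card_pos.mpr ⟨z3, Finset.mem_filter.mpr ⟨?_, hz3⟩⟩
    exact (SimpleGraph.mem_neighborFinset G v0 z3).mpr hz3adj.symm
  have hb1 : 0 < b 1 := by
    have h := (hdrg 1 (by norm_num) u0 z1 hz1).2.2
    rw [← h]
    refine Finset.card_pos.mpr ⟨z2, Finset.mem_filter.mpr ⟨?_, hz2⟩⟩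
    exact (SimpleGraph.mem_neighborFinset G z1 z2).mpr hz1adj
  have hb2 : 0 < b 2 := by
    have h := (hdrg 2 (by norm_num) u0 z2 hz2).2.2
    rw [← h]
    refine Finset.card_pos.mpr ⟨z3, Finset.mem_filter.mpr ⟨?_, hz3⟩⟩
    exact (SimpleGraph.mem_neighborFinset G z2 z3).mpr hz2adj
  have hb3 : 0 < b 3 := by
    have h := (hdrg 3 (by norm_num) u0 z3 hz3).2.2
    rw [← h]
    refine Finset.card_pos.mpr ⟨v0, Finset.mem_filter.mpr ⟨?_, h4⟩⟩
    exact (SimpleGraph.mem_neighborFinset G z3 v0).mpr hz3adj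
  -- partitions of the degree
  have hP1 : c 1 + a 1 + b 1 = k := partition_k hconn hreg hdrg (by norm_num) (by norm_num) hz1
  have hP2 : c 2 + a 2 + b 2 = k := partition_k hconn hreg hdrg (by norm_num) (by norm_num) hz2
  have hP3 : c 3 + a 3 + b 3 = k := partition_k hconn hreg hdrg (by norm_num) (by norm_num) hz3
  have hP4 : c 4 + a 4 + b 4 = k := partition_k hconn hreg hdrg (by norm_num) (le_refl 4) h4
  have hb4 : b 4 = 0 := by
    have h := (hdrg 4 (le_refl 4) u0 v0 h4).2.2
    rw [Finset.filter_false_of_mem, Finset.card_empty] at h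
    · omega
    · intro w _ hd
      have := hdiam u0 w
      omega
  have hkpos : 0 < k := by omega
  -- the all-ones eigenvector for k
  have hone : G.adjMatrix ℝ *ᵥ (fun _ => (1:ℝ)) = (k : ℝ) • (fun _ => (1:ℝ)) := by
    funext u
    rw [adjMatrix_mulVec_apply, Finset.sum_const, card_neighborFinset_eq_degree, hreg u]
    simp
  obtain ⟨K2, K3, K4, hr1k, hr2k, hr3k, -, -, hSK4, -⟩ :=
    eigen_package hconn hdiam hdrg hb0 hc2 hc3 hc4 hone
  have hK4k4 : K4 = (k4 : ℝ) := by
    have h1 := hSK4 u0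
    have h2 : distSum G 4 (fun _ => (1:ℝ)) u0 = (((G.distGraph 4).degree u0 : ℕ) : ℝ) := by
      rw [distSum, Finset.sum_const, nsmul_eq_mul, mul_one, ← card_neighborFinset_eq_degree,
        distGraph4_neighborFinset]
    rw [h2, hsrg.regular u0] at h1
    linarith [h1]
  -- real casts
  have hb1r : (0:ℝ) < (b 1 : ℝ) := by exact_mod_cast hb1
  have hb2r : (0:ℝ) < (b 2 : ℝ) := by exact_mod_cast hb2
  have hb3r : (0:ℝ) < (b 3 : ℝ) := by exact_mod_cast hb3
  have hc2r : (0:ℝ) < (c 2 : ℝ) := by exact_mod_cast hc2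
  have hc3r : (0:ℝ) < (c 3 : ℝ) := by exact_mod_cast hc3
  have hc4r : (0:ℝ) < (c 4 : ℝ) := by exact_mod_cast hc4
  have hkr : (0:ℝ) < (k : ℝ) := by exact_mod_cast hkpos
  have hK1r : (k:ℝ) = 1 + (a 1 : ℝ) + (b 1 : ℝ) := by
    have : 1 + a 1 + b 1 = k := by omega
    exact_mod_cast this.symm
  have hK2r : (k:ℝ) = (a 2 : ℝ) + (b 2 : ℝ) + (c 2 : ℝ) := by
    have : a 2 + b 2 + c 2 = k := by omega
    exact_mod_cast this.symm
  have hK3r : (k:ℝ) = (a 3 : ℝ) + (b 3 : ℝ) + (c 3 : ℝ) := by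
    have : a 3 + b 3 + c 3 = k := by omega
    exact_mod_cast this.symm
  have hK4r : (k:ℝ) = (a 4 : ℝ) + (c 4 : ℝ) := by
    have : a 4 + c 4 = k := by omega
    exact_mod_cast this.symm
  -- the product formula for k4
  have hk4p : (c 2 : ℝ)*(c 3 : ℝ)*(c 4 : ℝ)*(k4 : ℝ)
      = (k:ℝ)*(b 1 : ℝ)*(b 2 : ℝ)*(b 3 : ℝ) := by
    have e2 : (c 2 : ℝ)*K2 = (k:ℝ)*(b 1 : ℝ) := by
      linear_combination hr1k + (k:ℝ)*hK1r
    have e3 : (c 2 : ℝ)*(c 3 : ℝ)*K3 = (k:ℝ)*(b 1 : ℝ)*(b 2 : ℝ) := by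
      linear_combination (c 2 : ℝ)*hr2k + ((k:ℝ) - (a 2 : ℝ))*e2 + (k:ℝ)*(b 1 : ℝ)*hK2r
    have e4 : (c 2 : ℝ)*(c 3 : ℝ)*(c 4 : ℝ)*K4 = (k:ℝ)*(b 1 : ℝ)*(b 2 : ℝ)*(b 3 : ℝ) := by
      linear_combination (c 2 : ℝ)*(c 3 : ℝ)*hr3k + ((k:ℝ) - (a 3 : ℝ))*e3
        - (c 3 : ℝ)*(b 2 : ℝ)*e2 + (k:ℝ)*(b 1 : ℝ)*(b 2 : ℝ)*hK3r
    rw [← hK4k4]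
    exact e4
  -- eigenvalue order facts
  have h01 : lam 1 < (k:ℝ) := by rw [← hlam0]; exact hspec.1 (by decide : (0:Fin 5) < 1)
  have h02 : lam 2 < (k:ℝ) := by rw [← hlam0]; exact hspec.1 (by decide : (0:Fin 5) < 2)
  have h03 : lam 3 < (k:ℝ) := by rw [← hlam0]; exact hspec.1 (by decide : (0:Fin 5) < 3)
  have h04 : lam 4 < (k:ℝ) := by rw [← hlam0]; exact hspec.1 (by decide : (0:Fin 5) < 4)
  have h12 : lam 2 < lam 1 := hspec.1 (by decide : (1:Fin 5) < 2)
  have h23 : lam 3 < lam 2 := hspec.1 (by decide : (2:Fin 5) < 3)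
  have h34 : lam 4 < lam 3 := hspec.1 (by decide : (3:Fin 5) < 4)
  -- spectral data for the four nontrivial eigenvalues
  obtain ⟨Q2, Q3, x1, f11, f12, f13, f14, f15, f16⟩ :=
    spectral_data hconn hdiam hdrg hreg hb0 hc2 hc3 hc4 hsrg (hspec.2.1 1) (ne_of_lt h01)
  obtain ⟨R2, R3, x2, f21, f22, f23, f24, f25, f26⟩ :=
    spectral_data hconn hdiam hdrg hreg hb0 hc2 hc3 hc4 hsrg (hspec.2.1 2) (ne_of_lt h02)
  obtain ⟨S2, S3, x3, f31, f32, f33, f34, f35, f36⟩ :=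
    spectral_data hconn hdiam hdrg hreg hb0 hc2 hc3 hc4 hsrg (hspec.2.1 3) (ne_of_lt h03)
  obtain ⟨T2, T3, x4, f41, f42, f43, f44, f45, f46⟩ :=
    spectral_data hconn hdiam hdrg hreg hb0 hc2 hc3 hc4 hsrg (hspec.2.1 4) (ne_of_lt h04)
  -- assemble the E/C/D equations
  have hE1 : (b 3 : ℝ)*((lam 1)^2 - (a 1 : ℝ)*(lam 1) - (k:ℝ)) + (c 2 : ℝ)*(b 3 : ℝ)*(1+lam 1)
      + (c 2 : ℝ)*x1*((b 3 : ℝ)+lam 1-(a 4 : ℝ)) = 0 := by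
    linear_combination (-(b 3 : ℝ))*f11 + (c 2 : ℝ)*(b 3 : ℝ)*f14 + (c 2 : ℝ)*f15
  have hE2 : (b 3 : ℝ)*((lam 2)^2 - (a 1 : ℝ)*(lam 2) - (k:ℝ)) + (c 2 : ℝ)*(b 3 : ℝ)*(1+lam 2)
      + (c 2 : ℝ)*x2*((b 3 : ℝ)+lam 2-(a 4 : ℝ)) = 0 := by
    linear_combination (-(b 3 : ℝ))*f21 + (c 2 : ℝ)*(b 3 : ℝ)*f24 + (c 2 : ℝ)*f25
  have hE3 : (b 3 : ℝ)*((lam 3)^2 - (a 1 : ℝ)*(lam 3) - (k:ℝ)) + (c 2 : ℝ)*(b 3 : ℝ)*(1+lam 3)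
      + (c 2 : ℝ)*x3*((b 3 : ℝ)+lam 3-(a 4 : ℝ)) = 0 := by
    linear_combination (-(b 3 : ℝ))*f31 + (c 2 : ℝ)*(b 3 : ℝ)*f34 + (c 2 : ℝ)*f35
  have hE4 : (b 3 : ℝ)*((lam 4)^2 - (a 1 : ℝ)*(lam 4) - (k:ℝ)) + (c 2 : ℝ)*(b 3 : ℝ)*(1+lam 4)
      + (c 2 : ℝ)*x4*((b 3 : ℝ)+lam 4-(a 4 : ℝ)) = 0 := by
    linear_combination (-(b 3 : ℝ))*f41 + (c 2 : ℝ)*(b 3 : ℝ)*f44 + (c 2 : ℝ)*f45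
  have hC1 : (c 3 : ℝ)*(lam 1-(a 4 : ℝ))*x1
      + (lam 1-(a 2 : ℝ))*((b 3 : ℝ)*(1+lam 1+x1)+(lam 1-(a 4 : ℝ))*x1)
      + (b 1 : ℝ)*(b 3 : ℝ)*(lam 1) = 0 := by
    linear_combination (b 3 : ℝ)*f12 + ((c 3 : ℝ)+lam 1-(a 2 : ℝ))*f15
      + (lam 1-(a 2 : ℝ))*(b 3 : ℝ)*f14
  have hC2 : (c 3 : ℝ)*(lam 2-(a 4 : ℝ))*x2
      + (lam 2-(a 2 : ℝ))*((b 3 : ℝ)*(1+lam 2+x2)+(lam 2-(a 4 : ℝ))*x2)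
      + (b 1 : ℝ)*(b 3 : ℝ)*(lam 2) = 0 := by
    linear_combination (b 3 : ℝ)*f22 + ((c 3 : ℝ)+lam 2-(a 2 : ℝ))*f25
      + (lam 2-(a 2 : ℝ))*(b 3 : ℝ)*f24
  have hC3 : (c 3 : ℝ)*(lam 3-(a 4 : ℝ))*x3
      + (lam 3-(a 2 : ℝ))*((b 3 : ℝ)*(1+lam 3+x3)+(lam 3-(a 4 : ℝ))*x3)
      + (b 1 : ℝ)*(b 3 : ℝ)*(lam 3) = 0 := by
    linear_combination (b 3 : ℝ)*f32 + ((c 3 : ℝ)+lam 3-(a 2 : ℝ))*f35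
      + (lam 3-(a 2 : ℝ))*(b 3 : ℝ)*f34
  have hC4 : (c 3 : ℝ)*(lam 4-(a 4 : ℝ))*x4
      + (lam 4-(a 2 : ℝ))*((b 3 : ℝ)*(1+lam 4+x4)+(lam 4-(a 4 : ℝ))*x4)
      + (b 1 : ℝ)*(b 3 : ℝ)*(lam 4) = 0 := by
    linear_combination (b 3 : ℝ)*f42 + ((c 3 : ℝ)+lam 4-(a 2 : ℝ))*f45
      + (lam 4-(a 2 : ℝ))*(b 3 : ℝ)*f44
  have hD1 : (lam 1-(a 3 : ℝ))*(lam 1-(a 4 : ℝ))*x1 + (b 2 : ℝ)*(b 3 : ℝ)*(1+lam 1+x1)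
      + (b 2 : ℝ)*(lam 1-(a 4 : ℝ))*x1 - (c 4 : ℝ)*(b 3 : ℝ)*x1 = 0 := by
    linear_combination (-(b 3 : ℝ))*f13 + (lam 1-(a 3 : ℝ)+(b 2 : ℝ))*f15
      + (b 2 : ℝ)*(b 3 : ℝ)*f14
  have hD2 : (lam 2-(a 3 : ℝ))*(lam 2-(a 4 : ℝ))*x2 + (b 2 : ℝ)*(b 3 : ℝ)*(1+lam 2+x2)
      + (b 2 : ℝ)*(lam 2-(a 4 : ℝ))*x2 - (c 4 : ℝ)*(b 3 : ℝ)*x2 = 0 := by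
    linear_combination (-(b 3 : ℝ))*f23 + (lam 2-(a 3 : ℝ)+(b 2 : ℝ))*f25
      + (b 2 : ℝ)*(b 3 : ℝ)*f24
  have hD3 : (lam 3-(a 3 : ℝ))*(lam 3-(a 4 : ℝ))*x3 + (b 2 : ℝ)*(b 3 : ℝ)*(1+lam 3+x3)
      + (b 2 : ℝ)*(lam 3-(a 4 : ℝ))*x3 - (c 4 : ℝ)*(b 3 : ℝ)*x3 = 0 := by
    linear_combination (-(b 3 : ℝ))*f33 + (lam 3-(a 3 : ℝ)+(b 2 : ℝ))*f35
      + (b 2 : ℝ)*(b 3 : ℝ)*f34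
  have hD4 : (lam 4-(a 3 : ℝ))*(lam 4-(a 4 : ℝ))*x4 + (b 2 : ℝ)*(b 3 : ℝ)*(1+lam 4+x4)
      + (b 2 : ℝ)*(lam 4-(a 4 : ℝ))*x4 - (c 4 : ℝ)*(b 3 : ℝ)*x4 = 0 := by
    linear_combination (-(b 3 : ℝ))*f43 + (lam 4-(a 3 : ℝ)+(b 2 : ℝ))*f45
      + (b 2 : ℝ)*(b 3 : ℝ)*f44
  obtain ⟨dir1, dir2⟩ := keyAlgebra (ll := (ell : ℝ)) (mu := (mu : ℝ)) (k4 := (k4 : ℝ))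
    hb1r hb2r hb3r hc2r hc3r hc4r hkr hK1r hK3r hK4r h12 h23 h34
    hE1 hE2 hE3 hE4 hC1 hC2 hC3 hC4 hD1 hD2 hD3 hD4 f16 f26 f36 f46 hk4p
  constructor
  · intro hant
    have ha4 : a 4 = 0 := a4_zero_of_antipodal hant hdrg h4
    exact dir1 (by exact_mod_cast ha4)
  · intro hsum
    have hmu : (mu:ℝ) = 0 := dir2 hsum
    have hmu0 : mu = 0 := by exact_mod_cast hmu
    subst hmu0
    exact antipodal_of_mu_zero hsrg
end

section
/- Assume in addition that G is bipartite. Then G is strongly distance-regular if and only if λ1 = √k. -/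
open Finset

attribute [local instance] Classical.propDecidable

namespace SDRGAux
variable {V : Type*} {G : SimpleGraph V}

lemma fin2_ne {a b : Fin 2} (h : a ≠ b) (c : Fin 2) : (c = a ↔ ¬ c = b) := by
  revert h; revert a b c; decide

lemma walk_parity (C : G.Coloring (Fin 2)) {u v : V} (p : G.Walk u v) :
    (C u = C v) ↔ Even p.length := by
  induction p with
  | nil => simp
  | @cons u w v h q ih =>
    have hne : C w ≠ C u := fun hh => (C.valid h) hh.symm
    rw [SimpleGraph.Walk.length_cons, Nat.even_add_one, ← ih]
    constructor
    · intro hh h2; exact hne (h2 ▸ hh.symm)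
    · intro hh
      have hne' : C u ≠ C w := fun h4 => hne h4.symm
      have h3 : C v = C u := (fin2_ne hne' (C v)).mpr (fun h4 => hh h4.symm)
      exact h3.symm

lemma dist_parity (C : G.Coloring (Fin 2)) {u v : V} (hr : G.Reachable u v) :
    (C u = C v) ↔ Even (G.dist u v) := by
  obtain ⟨p, hp⟩ := hr.exists_walk_length_eq_dist
  rw [← hp]; exact walk_parity C p

lemma exists_adj_dist_succ {u v : V} {m : ℕ} (h : G.dist u v = m + 1) :
    ∃ x, G.Adj u x ∧ G.dist x v = m := by
  have hr : G.Reachable u v := SimpleGraph.Reachable.of_dist_ne_zero (by omega)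
  obtain ⟨p, hp⟩ := hr.exists_walk_length_eq_dist
  cases p with
  | nil => rw [h] at hp; simp at hp
  | @cons _ x _ hadj q =>
    refine ⟨x, hadj, ?_⟩
    have h1 : G.dist x v ≤ q.length := SimpleGraph.dist_le q
    obtain ⟨r, hrr⟩ := (SimpleGraph.Reachable.exists_walk_length_eq_dist ⟨q⟩ : ∃ p : G.Walk x v, p.length = G.dist x v)
    have h2 : G.dist u v ≤ (SimpleGraph.Walk.cons hadj r).length := SimpleGraph.dist_le _
    rw [SimpleGraph.Walk.length_cons] at hp h2
    rw [hrr] at h2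
    omega

lemma exists_on_geodesic (hconn : G.Connected) {u v : V} {j : ℕ} (h : G.dist u v = j) :
    ∀ i ≤ j, ∃ x, G.dist u x = i ∧ G.dist x v = j - i := by
  intro i hi
  induction i with
  | zero => exact ⟨u, by simp, by simpa using h⟩
  | succ i ih =>
    obtain ⟨x, hux, hxv⟩ := ih (by omega)
    have hxv' : G.dist x v = (j - i - 1) + 1 := by omega
    obtain ⟨y, hxy, hyv⟩ := exists_adj_dist_succ hxv'
    refine ⟨y, ?_, by
      have := hconn.dist_triangle (u := y) (v := x) (w := v)
      omega⟩
    have hd1 : G.dist x y = 1 := (SimpleGraph.dist_eq_one_iff_adj).mpr hxy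
    have t1 : G.dist u y ≤ G.dist u x + G.dist x y := hconn.dist_triangle
    have t2 : G.dist u v ≤ G.dist u y + G.dist y v := hconn.dist_triangle
    omega

lemma adj_dist_bounds (hconn : G.Connected) {u v w : V} (hadj : G.Adj v w) :
    G.dist u w ≤ G.dist u v + 1 ∧ G.dist u v ≤ G.dist u w + 1 := by
  have h1 : G.dist v w = 1 := (SimpleGraph.dist_eq_one_iff_adj).mpr hadj
  have h2 : G.dist w v = 1 := by rw [SimpleGraph.dist_comm]; exact h1
  have t1 : G.dist u w ≤ G.dist u v + G.dist v w := hconn.dist_triangle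
  have t2 : G.dist u v ≤ G.dist u w + G.dist w v := hconn.dist_triangle
  omega


-- part B

variable {V : Type*} {G : SimpleGraph V}

section counts
variable [Fintype V] {k : ℕ} {c a b : ℕ → ℕ}

lemma count_cases (hconn : G.Connected) (hdrg : G.IsDistRegular 4 c a b)
    {u v : V} {j : ℕ} (hj : G.dist u v = j) (hj4 : j ≤ 4) (i : ℕ) :
    (((G.neighborFinset v).filter (fun w => G.dist u w = i)).card : ℕ) =
      if i + 1 = j then c j else if i = j then a j else if i = j + 1 then b j else 0 := by
  obtain ⟨h1, h2, h3⟩ := hdrg j hj4 u v hj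
  by_cases e1 : i + 1 = j
  · rw [if_pos e1, ← h1]
    congr 1
    apply Finset.filter_congr
    intro w _
    omega
  rw [if_neg e1]
  by_cases e2 : i = j
  · rw [if_pos e2, ← h2]; subst e2; rfl
  rw [if_neg e2]
  by_cases e3 : i = j + 1
  · rw [if_pos e3, ← h3]; subst e3; rfl
  rw [if_neg e3]
  rw [Finset.card_eq_zero, Finset.filter_eq_empty_iff]
  intro w hw
  rw [SimpleGraph.mem_neighborFinset] at hw
  have hb := adj_dist_bounds hconn (u := u) hw
  omega

end counts



variable {V : Type*} {G : SimpleGraph V}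

lemma fin2_eq {x y z : Fin 2} (h : (x = y) ↔ (x = z)) : y = z := by
  revert h; revert x y z; decide

lemma dist_even_iff [Fintype V] (hconn : G.Connected) (C : G.Coloring (Fin 2)) (u v : V) :
    Even (G.dist u v) ↔ C u = C v := by
  rw [← dist_parity C (hconn.preconnected u v)]

section facts
variable [Fintype V] {k : ℕ} {c a b : ℕ → ℕ}
variable (hconn : G.Connected) (hreg : G.IsRegularOfDegree k)
  (hdiam : ∀ u v : V, G.dist u v ≤ 4)
  (hdrg : G.IsDistRegular 4 c a b) (C : G.Coloring (Fin 2))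

include hconn hdrg in
lemma a_eq_zero (C : G.Coloring (Fin 2)) {i : ℕ} (h1 : 1 ≤ i) (h4 : i ≤ 4)
    (hex : ∃ u v : V, G.dist u v = i) : a i = 0 := by
  obtain ⟨u, v, huv⟩ := hex
  have hcc := count_cases hconn hdrg huv h4 i
  rw [if_neg (by omega), if_pos rfl] at hcc
  rw [← hcc, Finset.card_eq_zero, Finset.filter_eq_empty_iff]
  intro w hw
  rw [SimpleGraph.mem_neighborFinset] at hw
  intro hdw
  have e1 : Even i ↔ C u = C v := by rw [← huv]; exact dist_even_iff hconn C u v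
  have e2 : Even i ↔ C u = C w := by rw [← hdw]; exact dist_even_iff hconn C u w
  exact (C.valid hw) (fin2_eq (e1.symm.trans e2))

include hconn hreg hdrg in
lemma b_zero_eq (u : V) : b 0 = k := by
  have h := (hdrg 0 (by omega) u u (by simp)).2.2
  rw [← h, ← hreg u]
  congr 1
  rw [Finset.filter_eq_self]
  intro w hw
  rw [SimpleGraph.mem_neighborFinset] at hw
  exact (SimpleGraph.dist_eq_one_iff_adj).mpr hw

include hconn hreg hdiam hdrg in
lemma c_four_eq (C : G.Coloring (Fin 2)) (hex : ∃ u v : V, G.dist u v = 4) : c 4 = k := by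
  obtain ⟨u, v, huv⟩ := hex
  have hcc := count_cases hconn hdrg huv (by omega) 3
  rw [if_pos rfl] at hcc
  rw [← hcc, ← hreg v]
  congr 1
  rw [Finset.filter_eq_self]
  intro w hw
  rw [SimpleGraph.mem_neighborFinset] at hw
  have hb := adj_dist_bounds hconn (u := u) hw
  have h4 : G.dist u w ≤ 4 := hdiam u w
  have hne : G.dist u w ≠ 4 := by
    intro h4'
    have e1 : C u = C v := (dist_even_iff hconn C u v).mp (by rw [huv]; decide)
    have e2 : C u = C w := (dist_even_iff hconn C u w).mp (by rw [h4']; decide)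
    exact (C.valid hw) (e1.symm.trans e2)
  omega

include hconn hdrg in
lemma c_pos {i : ℕ} (h1 : 1 ≤ i) (h4 : i ≤ 4) (hex : ∃ u v : V, G.dist u v = i) :
    1 ≤ c i := by
  obtain ⟨u, x, hux⟩ := hex
  have hxu : G.dist x u = (i - 1) + 1 := by rw [SimpleGraph.dist_comm]; omega
  obtain ⟨y, hxy, hyu⟩ := exists_adj_dist_succ hxu
  have hcc := count_cases hconn hdrg hux h4 (i - 1)
  rw [if_pos (by omega)] at hcc
  rw [← hcc]
  rw [Nat.one_le_iff_ne_zero, ← Nat.pos_iff_ne_zero, Finset.card_pos]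
  exact ⟨y, Finset.mem_filter.mpr ⟨SimpleGraph.mem_neighborFinset .. |>.mpr hxy,
    by rw [SimpleGraph.dist_comm]; exact hyu⟩⟩

include hconn hdrg in
lemma b_pos {i : ℕ} (h3 : i ≤ 3) (hex : ∃ u v : V, G.dist u v = i + 1) :
    1 ≤ b i := by
  obtain ⟨u, z, huz⟩ := hex
  have hzu : G.dist z u = i + 1 := by rw [SimpleGraph.dist_comm]; exact huz
  obtain ⟨y, hzy, hyu⟩ := exists_adj_dist_succ hzu
  have huy : G.dist u y = i := by rw [SimpleGraph.dist_comm]; exact hyu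
  have hcc := count_cases hconn hdrg huy (by omega) (i + 1)
  rw [if_neg (by omega), if_neg (by omega), if_pos rfl] at hcc
  rw [← hcc, Nat.one_le_iff_ne_zero, ← Nat.pos_iff_ne_zero, Finset.card_pos]
  exact ⟨z, Finset.mem_filter.mpr ⟨SimpleGraph.mem_neighborFinset .. |>.mpr hzy.symm, huz⟩⟩

include hconn hreg hdrg in
lemma k_ge_two (hex1 : ∃ u v : V, G.dist u v = 1) (hex2 : ∃ u v : V, G.dist u v = 2) :
    2 ≤ k := by
  obtain ⟨u, v, huv⟩ := hex1
  have hc1 := count_cases hconn hdrg huv (by omega) 0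
  rw [if_pos rfl] at hc1
  have hb1 := count_cases hconn hdrg huv (by omega) 2
  rw [if_neg (by omega), if_neg (by omega), if_pos rfl] at hb1
  have hcpos : 1 ≤ c 1 := c_pos hconn hdrg (by omega) (by omega) ⟨u, v, huv⟩
  have hbpos : 1 ≤ b 1 := b_pos hconn hdrg (by omega) hex2
  have hdisj : Disjoint ((G.neighborFinset v).filter (fun w => G.dist u w = 0))
      ((G.neighborFinset v).filter (fun w => G.dist u w = 2)) := by
    rw [Finset.disjoint_left]
    intro w hw0 hw2
    have := (Finset.mem_filter.mp hw0).2
    have := (Finset.mem_filter.mp hw2).2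
    omega
  have hsub := Finset.card_union_le ((G.neighborFinset v).filter (fun w => G.dist u w = 0))
      ((G.neighborFinset v).filter (fun w => G.dist u w = 2))
  have hcard := Finset.card_union_of_disjoint hdisj
  have hle : (((G.neighborFinset v).filter (fun w => G.dist u w = 0)) ∪
      ((G.neighborFinset v).filter (fun w => G.dist u w = 2))).card ≤ (G.neighborFinset v).card :=
    Finset.card_le_card (Finset.union_subset (Finset.filter_subset _ _) (Finset.filter_subset _ _))
  rw [hcard, hc1, hb1] at hle
  have hdeg : G.degree v = (G.neighborFinset v).card := rfl
  have := hreg v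
  omega

end facts


end SDRGAux

namespace SDRGAux
variable {V : Type*} {G : SimpleGraph V}

variable (G) in
noncomputable def Adist [Fintype V] (i : ℕ) : Matrix V V ℝ :=
  Matrix.of fun u v => if G.dist u v = i then 1 else 0

section mat
variable [Fintype V] [DecidableEq V] {k : ℕ} {c a b : ℕ → ℕ}

lemma Adist_zero (hconn : G.Connected) : Adist G 0 = 1 := by
  ext u v
  simp only [Adist, Matrix.of_apply, Matrix.one_apply]
  by_cases h : u = v
  · subst h; simp
  · rw [if_neg (fun hd => h (hconn.dist_eq_zero_iff.mp hd)), if_neg h]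

lemma Adist_one : Adist G 1 = G.adjMatrix ℝ := by
  ext u v
  simp only [Adist, Matrix.of_apply, SimpleGraph.adjMatrix_apply]
  by_cases h : G.Adj u v
  · rw [if_pos (SimpleGraph.dist_eq_one_iff_adj.mpr h), if_pos h]
  · rw [if_neg (fun hd => h (SimpleGraph.dist_eq_one_iff_adj.mp hd)), if_neg h]

lemma Adist_big (hdiam : ∀ u v : V, G.dist u v ≤ 4) {i : ℕ} (hi : 5 ≤ i) :
    Adist G i = 0 := by
  ext u v
  simp only [Adist, Matrix.of_apply, Matrix.zero_apply]
  rw [if_neg]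
  have := hdiam u v
  omega

lemma mul_Adist_apply (i : ℕ) (u v : V) :
    (G.adjMatrix ℝ * Adist G i) u v
      = (((G.neighborFinset u).filter (fun w => G.dist v w = i)).card : ℝ) := by
  rw [Matrix.mul_apply]
  have hset : ((G.neighborFinset u).filter (fun w => G.dist v w = i))
      = Finset.univ.filter (fun w => G.Adj u w ∧ G.dist w v = i) := by
    ext w
    simp only [Finset.mem_filter, SimpleGraph.mem_neighborFinset, Finset.mem_univ, true_and]
    rw [SimpleGraph.dist_comm]
  rw [hset, ← Finset.sum_boole]
  apply Finset.sum_congr rfl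
  intro w _
  by_cases h1 : G.Adj u w <;> by_cases h2 : G.dist w v = i <;>
    simp [h1, h2, Adist, Matrix.of_apply]

lemma A_mul_Adist (hconn : G.Connected) (hdiam : ∀ u v : V, G.dist u v ≤ 4)
    (hdrg : G.IsDistRegular 4 c a b) {i : ℕ} (h1 : 1 ≤ i) (h4 : i ≤ 4) (ha : a i = 0) :
    G.adjMatrix ℝ * Adist G i
      = (b (i-1) : ℝ) • Adist G (i-1) + (c (i+1) : ℝ) • Adist G (i+1) := by
  ext u v
  rw [mul_Adist_apply]
  have hj4 : G.dist v u ≤ 4 := hdiam v u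
  have hcc := count_cases hconn hdrg (rfl : G.dist v u = G.dist v u) hj4 i
  have hcc' := congrArg (Nat.cast : ℕ → ℝ) hcc
  push_cast [apply_ite (Nat.cast : ℕ → ℝ)] at hcc'
  rw [hcc']
  have hcm : G.dist u v = G.dist v u := SimpleGraph.dist_comm
  simp only [Matrix.add_apply, Matrix.smul_apply, Adist, Matrix.of_apply, smul_eq_mul, hcm]
  by_cases e1 : i + 1 = G.dist v u
  · rw [if_pos e1, if_neg (by omega), if_pos (by omega), ← e1]
    ring
  rw [if_neg e1]
  by_cases e2 : i = G.dist v u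
  · rw [if_pos e2, if_neg (by omega), if_neg (by omega), ← e2, ha]
    push_cast
    ring
  rw [if_neg e2]
  by_cases e3 : i = G.dist v u + 1
  · rw [if_pos e3, if_pos (by omega), if_neg (by omega),
      show G.dist v u = i - 1 by omega]
    ring
  · rw [if_neg e3, if_neg (by omega), if_neg (by omega)]
    ring

end mat
end SDRGAux

namespace SDRGAux

lemma quintic_identity {n : Type*} [Fintype n] [DecidableEq n]
    (A A2 A3 A4 : Matrix n n ℝ) (k c2 c3 c4 b1 b2 b3 : ℝ)
    (h1 : A * A = k • 1 + c2 • A2)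
    (h2 : A * A2 = b1 • A + c3 • A3)
    (h3 : A * A3 = b2 • A2 + c4 • A4)
    (h4 : A * A4 = b3 • A3) :
    A*(A*(A*(A*A))) + (b2*c3*k + b3*c4*(k + b1*c2)) • A
      = (k + b1*c2 + b2*c3 + b3*c4) • (A*(A*A)) := by
  have q3 : A*(A*A) = (k + b1*c2) • A + (c2*c3) • A3 := by
    rw [h1, Matrix.mul_add, Matrix.mul_smul, Matrix.mul_smul, Matrix.mul_one, h2]
    module
  have q4 : A*(A*(A*A)) = ((k + b1*c2)*k) • 1 + ((k + b1*c2)*c2 + c2*c3*b2) • A2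
      + (c2*c3*c4) • A4 := by
    rw [q3, Matrix.mul_add, Matrix.mul_smul, Matrix.mul_smul, h1, h3]
    module
  have q5 : A*(A*(A*(A*A))) = (((k + b1*c2)*k) + (((k + b1*c2)*c2 + c2*c3*b2))*b1) • A
      + ((((k + b1*c2)*c2 + c2*c3*b2))*c3 + (c2*c3*c4)*b3) • A3 := by
    rw [q4, Matrix.mul_add, Matrix.mul_add, Matrix.mul_smul, Matrix.mul_smul, Matrix.mul_smul,
      Matrix.mul_one, h2, h4]
    module
  rw [q5, q3]
  module

end SDRGAux

namespace SDRGAux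
variable {V : Type*} {G : SimpleGraph V}

section spec
open Matrix
variable [Fintype V] [DecidableEq V] {k : ℕ}

lemma adjEnd_apply (x : V → ℝ) : G.adjEnd x = G.adjMatrix ℝ *ᵥ x := by
  simp [SimpleGraph.adjEnd, Matrix.toLin'_apply]

lemma eigen_vec {μ : ℝ} (hμ : Module.End.HasEigenvalue G.adjEnd μ) :
    ∃ x : V → ℝ, x ≠ 0 ∧ G.adjMatrix ℝ *ᵥ x = μ • x := by
  obtain ⟨x, hx⟩ := hμ.exists_hasEigenvector
  exact ⟨x, hx.2, by rw [← adjEnd_apply]; exact hx.apply_eq_smul⟩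

lemma eigen_of_vec {μ : ℝ} {x : V → ℝ} (hx : x ≠ 0) (h : G.adjMatrix ℝ *ᵥ x = μ • x) :
    Module.End.HasEigenvalue G.adjEnd μ :=
  Module.End.hasEigenvalue_of_hasEigenvector
    ⟨Module.End.mem_eigenspace_iff.mpr (by rw [adjEnd_apply]; exact h), hx⟩

lemma eigen_bound (hreg : G.IsRegularOfDegree k) {μ : ℝ}
    (hμ : Module.End.HasEigenvalue G.adjEnd μ) : |μ| ≤ (k : ℝ) := by
  obtain ⟨x, hx0, hAx⟩ := eigen_vec hμ
  obtain ⟨u0, hu0⟩ : ∃ u, x u ≠ 0 := by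
    by_contra h
    push_neg at h
    exact hx0 (funext fun u => h u)
  have hne : (Finset.univ : Finset V).Nonempty := ⟨u0, Finset.mem_univ _⟩
  obtain ⟨u, -, hu⟩ := Finset.exists_max_image Finset.univ (fun w => |x w|) hne
  have hxu : 0 < |x u| := lt_of_lt_of_le (abs_pos.mpr hu0) (hu u0 (Finset.mem_univ _))
  have h1 : μ * x u = ∑ w ∈ G.neighborFinset u, x w := by
    have h := congrFun hAx u
    rw [SimpleGraph.adjMatrix_mulVec_apply] at h
    simpa using h.symm
  have h2 : |μ| * |x u| ≤ (k : ℝ) * |x u| := by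
    rw [← abs_mul, h1]
    calc |∑ w ∈ G.neighborFinset u, x w| ≤ ∑ w ∈ G.neighborFinset u, |x w| :=
          Finset.abs_sum_le_sum_abs _ _
      _ ≤ ∑ _w ∈ G.neighborFinset u, |x u| :=
          Finset.sum_le_sum (fun w _ => hu w (Finset.mem_univ _))
      _ = (k : ℝ) * |x u| := by
          rw [Finset.sum_const, ← hreg u, SimpleGraph.degree]
          simp [nsmul_eq_mul]
  exact le_of_mul_le_mul_right h2 hxu

lemma eigen_neg (C : G.Coloring (Fin 2)) {μ : ℝ}
    (hμ : Module.End.HasEigenvalue G.adjEnd μ) :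
    Module.End.HasEigenvalue G.adjEnd (-μ) := by
  obtain ⟨x, hx0, hAx⟩ := eigen_vec hμ
  set s : V → ℝ := fun v => if C v = 0 then 1 else -1 with hs
  have fin2 : ∀ a b : Fin 2, a ≠ b → a ≠ 0 → b = 0 := by decide
  have hsign : ∀ {u w : V}, G.Adj u w → s w = -(s u) := by
    intro u w hadj
    have hne : C u ≠ C w := C.valid hadj
    by_cases h : C u = 0
    · simp only [hs]
      rw [if_pos h, if_neg (fun h' => hne (h.trans h'.symm))]
      try norm_num
    · simp only [hs]
      rw [if_neg h, if_pos (fin2 _ _ hne h)]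
      try norm_num
  have hs_ne : ∀ v, s v ≠ 0 := by
    intro v; by_cases h : C v = 0 <;> simp [hs, h]
  refine eigen_of_vec (x := fun v => s v * x v) ?_ ?_
  · intro h
    obtain ⟨u0, hu0⟩ : ∃ u, x u ≠ 0 := by
      by_contra hc; push_neg at hc; exact hx0 (funext fun u => hc u)
    have := congrFun h u0
    simp only [Pi.zero_apply] at this
    exact hu0 (by
      rcases mul_eq_zero.mp this with h' | h'
      · exact absurd h' (hs_ne u0)
      · exact h')
  · ext u
    rw [SimpleGraph.adjMatrix_mulVec_apply]
    have hstep : ∀ w ∈ G.neighborFinset u, s w * x w = -(s u) * x w := by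
      intro w hw
      rw [SimpleGraph.mem_neighborFinset] at hw
      rw [hsign hw]
    rw [Finset.sum_congr rfl hstep, ← Finset.mul_sum]
    have := congrFun hAx u
    rw [SimpleGraph.adjMatrix_mulVec_apply] at this
    rw [this]
    simp only [Pi.smul_apply, smul_eq_mul]
    ring

end spec
end SDRGAux

namespace SDRGAux
variable {V : Type*} {G : SimpleGraph V}

section pin
open Matrix
variable [Fintype V] [DecidableEq V] {k : ℕ}

lemma lam_pin (lam : Fin 5 → ℝ) (hsa : StrictAnti lam)
    (hev : ∀ i, Module.End.HasEigenvalue G.adjEnd (lam i))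
    (hall : ∀ μ : ℝ, Module.End.HasEigenvalue G.adjEnd μ → ∃ i, μ = lam i)
    (hlam0 : lam 0 = (k : ℝ))
    (hreg : G.IsRegularOfDegree k) (C : G.Coloring (Fin 2)) :
    lam 4 = -(k : ℝ) ∧ lam 2 = 0 ∧ lam 3 = -lam 1 := by
  have hmk : Module.End.HasEigenvalue G.adjEnd (-(k : ℝ)) := by
    have := eigen_neg C (hev 0); rwa [hlam0] at this
  obtain ⟨i4, hi4⟩ := hall _ hmk
  have hb4 : |lam 4| ≤ (k : ℝ) := eigen_bound hreg (hev 4)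
  have hmono : lam 4 ≤ lam i4 := hsa.antitone (Fin.le_last i4)
  have h4 : lam 4 = -(k : ℝ) := by
    rw [← hi4] at hmono
    rcases abs_le.mp hb4 with ⟨hl, _⟩
    linarith
  have key : ∀ t : Fin 5, t ≠ 0 → t ≠ 4 → ∃ j : Fin 5, j ≠ 0 ∧ j ≠ 4 ∧ lam j = -(lam t) := by
    intro t ht0 ht4
    obtain ⟨j, hj⟩ := hall _ (eigen_neg C (hev t))
    refine ⟨j, ?_, ?_, hj.symm⟩
    · rintro rfl
      rw [hlam0] at hj
      have : lam t = lam 4 := by rw [h4]; linarith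
      exact ht4 (hsa.injective this)
    · rintro rfl
      rw [h4] at hj
      have : lam t = lam 0 := by rw [hlam0]; linarith
      exact ht0 (hsa.injective this)
  obtain ⟨j1, hj10, hj14, hj1⟩ := key 1 (by decide) (by decide)
  obtain ⟨j2, hj20, hj24, hj2⟩ := key 2 (by decide) (by decide)
  obtain ⟨j3, hj30, hj34, hj3⟩ := key 3 (by decide) (by decide)
  have l12 : lam 2 < lam 1 := hsa (by decide)
  have l23 : lam 3 < lam 2 := hsa (by decide)
  have hlt21 : j2 < j1 := by
    rw [← hsa.lt_iff_gt, hj1, hj2]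
    linarith
  have hlt32 : j3 < j2 := by
    rw [← hsa.lt_iff_gt, hj2, hj3]
    linarith
  have v10 : j1.val ≠ 0 := fun h => hj10 (Fin.ext h)
  have v14 : j1.val ≠ 4 := fun h => hj14 (Fin.ext h)
  have v20 : j2.val ≠ 0 := fun h => hj20 (Fin.ext h)
  have v24 : j2.val ≠ 4 := fun h => hj24 (Fin.ext h)
  have v30 : j3.val ≠ 0 := fun h => hj30 (Fin.ext h)
  have v34 : j3.val ≠ 4 := fun h => hj34 (Fin.ext h)
  have hv21 : j2.val < j1.val := hlt21
  have hv32 : j3.val < j2.val := hlt32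
  have hb1 : j1.val < 5 := j1.isLt
  have hj1e : j1 = (3 : Fin 5) := Fin.ext (by simp only [show ((3:Fin 5) : ℕ) = 3 from rfl]; omega)
  have hj2e : j2 = (2 : Fin 5) := Fin.ext (by simp only [show ((2:Fin 5) : ℕ) = 2 from rfl]; omega)
  rw [hj1e] at hj1
  rw [hj2e] at hj2
  exact ⟨h4, by linarith, hj1⟩

end pin
end SDRGAux

namespace SDRGAux
variable {V : Type*} {G : SimpleGraph V}

section herm
open Matrix
variable [Fintype V] [DecidableEq V]

lemma adj_isHermitian : (G.adjMatrix ℝ).IsHermitian := by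
  show (G.adjMatrix ℝ)ᴴ = G.adjMatrix ℝ
  ext i j
  simp [Matrix.conjTranspose_apply, SimpleGraph.adj_comm]

lemma poly_vanish (s t : ℝ)
    (hroot : ∀ μ : ℝ, Module.End.HasEigenvalue G.adjEnd μ → μ^5 + t*μ = s*μ^3) :
    (G.adjMatrix ℝ)*((G.adjMatrix ℝ)*((G.adjMatrix ℝ)*((G.adjMatrix ℝ)*(G.adjMatrix ℝ))))
      + t • (G.adjMatrix ℝ)
      = s • ((G.adjMatrix ℝ)*((G.adjMatrix ℝ)*(G.adjMatrix ℝ))) := by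
  set A := G.adjMatrix ℝ with hA
  have hH : A.IsHermitian := adj_isHermitian
  set Q : Matrix V V ℝ := A*(A*(A*(A*A))) + t•A - s•(A*(A*A)) with hQdef
  have hvan : ∀ i : V, Q *ᵥ (hH.eigenvectorBasis i : V → ℝ) = 0 := by
    intro i
    set x : V → ℝ := (hH.eigenvectorBasis i : V → ℝ) with hx
    set μ := hH.eigenvalues i with hmu
    have hAx : A *ᵥ x = μ • x := hH.mulVec_eigenvectorBasis i
    have hx0 : x ≠ 0 := by rw [hx, Ne, WithLp.ofLp_eq_zero]; exact hH.eigenvectorBasis.orthonormal.ne_zero i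
    have heig : Module.End.HasEigenvalue G.adjEnd μ := eigen_of_vec hx0 hAx
    have h3 : (A*(A*A)) *ᵥ x = (μ^3) • x := by
      simp only [← Matrix.mulVec_mulVec, hAx, Matrix.mulVec_smul, smul_smul]
      congr 1; ring
    have h5 : (A*(A*(A*(A*A)))) *ᵥ x = (μ^5) • x := by
      simp only [← Matrix.mulVec_mulVec, hAx, Matrix.mulVec_smul, smul_smul]
      congr 1; ring
    have hsc : μ^5 + t*μ - s*μ^3 = 0 := by
      have := hroot μ heig; linarith
    rw [hQdef, Matrix.sub_mulVec, Matrix.add_mulVec, Matrix.smul_mulVec,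
      Matrix.smul_mulVec, h5, h3, hAx, smul_smul, smul_smul, ← add_smul, ← sub_smul,
      hsc, zero_smul]
  have hlin : Matrix.toLin' Q = 0 := by
    apply Module.Basis.ext (hH.eigenvectorBasis.toBasis.map (WithLp.linearEquiv 2 ℝ (V → ℝ)))
    intro i
    rw [Module.Basis.map_apply, OrthonormalBasis.coe_toBasis]
    rw [LinearMap.zero_apply, Matrix.toLin'_apply]
    exact hvan i
  have hQ0 : Q = 0 := Matrix.toLin'.injective (by rw [hlin, map_zero])
  rw [hQdef] at hQ0
  exact sub_eq_zero.mp hQ0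

end herm
end SDRGAux

namespace SDRGAux
variable {V : Type*} {G : SimpleGraph V}

section comb
variable [Fintype V] {k : ℕ} {c a b : ℕ → ℕ}
variable (hconn : G.Connected) (hdiam : ∀ u v : V, G.dist u v ≤ 4)
  (hdrg : G.IsDistRegular 4 c a b)

include hconn hdiam in
lemma nbr_dist3 (C : G.Coloring (Fin 2)) {u v w : V} (huv : G.dist u v = 4)
    (hadj : G.Adj v w) : G.dist u w = 3 := by
  have hb := adj_dist_bounds hconn (u := u) hadj
  have h4 : G.dist u w ≤ 4 := hdiam u w
  have hne : G.dist u w ≠ 4 := by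
    intro h4'
    have e1 : C u = C v := (dist_even_iff hconn C u v).mp (by rw [huv]; decide)
    have e2 : C u = C w := (dist_even_iff hconn C u w).mp (by rw [h4']; decide)
    exact (C.valid hadj) (e1.symm.trans e2)
  omega

include hconn hdiam hdrg in
lemma no_4_4_2 (C : G.Coloring (Fin 2)) (hc2 : 1 ≤ c 2) (hb3 : b 3 = 1)
    {u v w : V} (huv : G.dist u v = 4) (hvw : G.dist v w = 4) (huw : G.dist u w = 2) :
    False := by
  -- find x ∈ N(w) with dist u x = 1
  have hcnt := count_cases hconn hdrg huw (by omega) 1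
  rw [if_pos rfl] at hcnt
  have hpos : 0 < ((G.neighborFinset w).filter (fun x => G.dist u x = 1)).card := by omega
  obtain ⟨x, hx⟩ := Finset.card_pos.mp hpos
  rw [Finset.mem_filter, SimpleGraph.mem_neighborFinset] at hx
  obtain ⟨hwx, hux⟩ := hx
  have hvx : G.dist v x = 3 := nbr_dist3 hconn hdiam C hvw (SimpleGraph.adj_symm G hwx).symm
  have hb := (hdrg 3 (by omega) v x hvx).2.2
  rw [hb3] at hb
  norm_num at hb
  have hmem : ({u, w} : Finset V) ⊆ (G.neighborFinset x).filter (fun y => G.dist v y = 4) := by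
    intro y hy
    rcases Finset.mem_insert.mp hy with rfl | hy
    · rw [Finset.mem_filter, SimpleGraph.mem_neighborFinset]
      refine ⟨(SimpleGraph.dist_eq_one_iff_adj.mp hux).symm, ?_⟩
      rw [SimpleGraph.dist_comm]; exact huv
    · rw [Finset.mem_singleton] at hy
      subst hy
      rw [Finset.mem_filter, SimpleGraph.mem_neighborFinset]
      exact ⟨hwx.symm, hvw⟩
  have hne : u ≠ w := fun h => by rw [h, SimpleGraph.dist_self] at huw; omega
  have h2 : ({u, w} : Finset V).card = 2 := by
    rw [Finset.card_insert_of_notMem (by simpa using hne), Finset.card_singleton]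
  have := Finset.card_le_card hmem
  omega

include hconn hdiam hdrg in
lemma trans4 (C : G.Coloring (Fin 2)) (hc2 : 1 ≤ c 2) (hb3 : b 3 = 1)
    {u v w : V} (huv : G.dist u v = 4) (huw : G.dist u w = 4) (hvw : v ≠ w) :
    G.dist v w = 4 := by
  have e1 : C u = C v := (dist_even_iff hconn C u v).mp (by rw [huv]; decide)
  have e2 : C u = C w := (dist_even_iff hconn C u w).mp (by rw [huw]; decide)
  have heven : Even (G.dist v w) := (dist_even_iff hconn C v w).mpr (e1.symm.trans e2)
  have hne : G.dist v w ≠ 0 := (hconn.pos_dist_of_ne hvw).ne'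
  have hle : G.dist v w ≤ 4 := hdiam v w
  have h2 : G.dist v w ≠ 2 := by
    intro h2
    exact no_4_4_2 hconn hdiam hdrg C hc2 hb3 (by rw [SimpleGraph.dist_comm]; exact huv) huw h2
  rcases heven with ⟨m, hm⟩
  omega

end comb
end SDRGAux

namespace SDRGAux
variable {V : Type*} {G : SimpleGraph V}

section levels
variable [Fintype V] {k : ℕ} {c a b : ℕ → ℕ}

lemma level_count (hdrg : G.IsDistRegular 4 c a b) (u : V) {i : ℕ} (hi : i ≤ 3) :
    ((Finset.univ.filter (fun y => G.dist u y = i+1)).card) * (c (i+1))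
      = ((Finset.univ.filter (fun x => G.dist u x = i)).card) * (b i) := by
  classical
  set Γi := Finset.univ.filter (fun x => G.dist u x = i) with hΓi
  set Γi1 := Finset.univ.filter (fun y => G.dist u y = i+1) with hΓi1
  have hswap : ∑ x ∈ Γi, ∑ y ∈ Γi1, (if G.Adj x y then (1:ℕ) else 0)
      = ∑ y ∈ Γi1, ∑ x ∈ Γi, (if G.Adj x y then (1:ℕ) else 0) := Finset.sum_comm
  have hL : ∀ x ∈ Γi, ∑ y ∈ Γi1, (if G.Adj x y then (1:ℕ) else 0) = b i := by
    intro x hx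
    rw [hΓi, Finset.mem_filter] at hx
    rw [(Finset.card_filter _ _).symm]
    have hset : Γi1.filter (fun y => G.Adj x y)
        = (G.neighborFinset x).filter (fun y => G.dist u y = i + 1) := by
      ext y
      simp only [hΓi1, Finset.mem_filter, SimpleGraph.mem_neighborFinset, Finset.mem_univ,
        true_and]
      tauto
    rw [hset]
    exact (hdrg i (by omega) u x hx.2).2.2
  have hR : ∀ y ∈ Γi1, ∑ x ∈ Γi, (if G.Adj x y then (1:ℕ) else 0) = c (i+1) := by
    intro y hy
    rw [hΓi1, Finset.mem_filter] at hy
    rw [(Finset.card_filter _ _).symm]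
    have hset : Γi.filter (fun x => G.Adj x y)
        = (G.neighborFinset y).filter (fun x => G.dist u x = (i+1) - 1) := by
      ext x
      simp only [hΓi, Finset.mem_filter, SimpleGraph.mem_neighborFinset, Finset.mem_univ,
        true_and, Nat.add_sub_cancel]
      rw [SimpleGraph.adj_comm]
      tauto
    rw [hset]
    exact (hdrg (i+1) (by omega) u y hy.2).1
  rw [Finset.sum_congr rfl hL, Finset.sum_congr rfl hR] at hswap
  simp only [Finset.sum_const, smul_eq_mul] at hswap
  omega

lemma gamma_one (hconn : G.Connected) (hreg : G.IsRegularOfDegree k) (u : V) :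
    (Finset.univ.filter (fun y => G.dist u y = 1)).card = k := by
  rw [← hreg u]
  have : Finset.univ.filter (fun y => G.dist u y = 1) = G.neighborFinset u := by
    ext y
    simp only [Finset.mem_filter, Finset.mem_univ, true_and, SimpleGraph.mem_neighborFinset]
    exact SimpleGraph.dist_eq_one_iff_adj
  rw [this]
  rfl

lemma k4_const (hconn : G.Connected) (hreg : G.IsRegularOfDegree k)
    (hdrg : G.IsDistRegular 4 c a b) (hc2 : 1 ≤ c 2) (hc3 : 1 ≤ c 3) (hc4 : 1 ≤ c 4)
    (u u' : V) :
    (Finset.univ.filter (fun y => G.dist u y = 4)).card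
      = (Finset.univ.filter (fun y => G.dist u' y = 4)).card := by
  have key : ∀ w : V, (Finset.univ.filter (fun y => G.dist w y = 4)).card * (c 4 * c 3 * c 2)
      = k * (b 1 * b 2 * b 3) := by
    intro w
    have e1 := level_count hdrg w (i := 1) (by omega)
    have e2 := level_count hdrg w (i := 2) (by omega)
    have e3 := level_count hdrg w (i := 3) (by omega)
    norm_num at e1 e2 e3
    have hnb : G.neighborFinset w = Finset.univ.filter (fun x => G.Adj w x) := by
      ext y; simp [SimpleGraph.mem_neighborFinset]
    have g1 : (Finset.univ.filter (fun x => G.Adj w x)).card = k := by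
      rw [← hnb]; exact hreg w
    set n1 := (Finset.univ.filter (fun x => G.Adj w x)).card
    set n2 := (Finset.univ.filter (fun y => G.dist w y = 2)).card
    set n3 := (Finset.univ.filter (fun y => G.dist w y = 3)).card
    set n4 := (Finset.univ.filter (fun y => G.dist w y = 4)).card
    calc n4 * (c 4 * c 3 * c 2) = (n4 * c 4) * c 3 * c 2 := by ring
      _ = (n3 * b 3) * c 3 * c 2 := by rw [e3]
      _ = (n3 * c 3) * b 3 * c 2 := by ring
      _ = (n2 * b 2) * b 3 * c 2 := by rw [e2]
      _ = (n2 * c 2) * (b 2 * b 3) := by ring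
      _ = (n1 * b 1) * (b 2 * b 3) := by rw [e1]
      _ = n1 * (b 1 * b 2 * b 3) := by ring
      _ = k * (b 1 * b 2 * b 3) := by rw [g1]
  have h1 := key u
  have h2 := key u'
  have hpos : 0 < c 4 * c 3 * c 2 := by positivity
  exact Nat.eq_of_mul_eq_mul_right hpos (h1.trans h2.symm)

end levels
end SDRGAux

namespace SDRGAux
variable {V : Type*} {G : SimpleGraph V}

section srg
variable [Fintype V] [DecidableEq V] {k : ℕ} {c a b : ℕ → ℕ}
variable (hconn : G.Connected) (hdiam : ∀ u v : V, G.dist u v ≤ 4)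
  (hdrg : G.IsDistRegular 4 c a b)

lemma distGraph_adj (u v : V) : (G.distGraph 4).Adj u v ↔ G.dist u v = 4 := by
  constructor
  · exact fun h => h.2
  · intro h
    exact ⟨fun he => by rw [he, SimpleGraph.dist_self] at h; omega, h⟩

include hconn hdiam hdrg in
lemma build_srg (C : G.Coloring (Fin 2)) (hc2 : 1 ≤ c 2) (hb3 : b 3 = 1)
    {k4 : ℕ} (hreg4 : ∀ u : V, (Finset.univ.filter (fun y => G.dist u y = 4)).card = k4) :
    (G.distGraph 4).IsSRGWith (Fintype.card V) k4 (k4 - 1) 0 := by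
  classical
  have hnbr : ∀ u : V, (G.distGraph 4).neighborFinset u
      = Finset.univ.filter (fun y => G.dist u y = 4) := by
    intro u
    ext y
    simp only [SimpleGraph.mem_neighborFinset, Finset.mem_filter, Finset.mem_univ, true_and]
    exact distGraph_adj u y
  refine ⟨rfl, ?_, ?_, ?_⟩
  · intro u
    show ((G.distGraph 4).neighborFinset u).card = k4
    rw [hnbr]; exact hreg4 u
  · intro v w hvw
    have hdvw : G.dist v w = 4 := (distGraph_adj v w).mp hvw
    rw [← Set.toFinset_card]
    have hset : ((G.distGraph 4).commonNeighbors v w).toFinset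
        = (Finset.univ.filter (fun y => G.dist v y = 4)).erase w := by
      ext y
      simp only [Set.mem_toFinset, SimpleGraph.mem_commonNeighbors, Finset.mem_erase,
        Finset.mem_filter, Finset.mem_univ, true_and]
      rw [distGraph_adj, distGraph_adj]
      constructor
      · rintro ⟨h1, h2⟩
        refine ⟨fun he => ?_, h1⟩
        rw [he, SimpleGraph.dist_self] at h2
        omega
      · rintro ⟨hne, h1⟩
        exact ⟨h1, trans4 hconn hdiam hdrg C hc2 hb3 hdvw h1 (fun h => hne h.symm)⟩
    rw [hset, Finset.card_erase_of_mem, hreg4]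
    rw [Finset.mem_filter]
    exact ⟨Finset.mem_univ _, hdvw⟩
  · intro v w hne hnadj
    rw [← Set.toFinset_card, Finset.card_eq_zero]
    ext y
    simp only [Set.mem_toFinset, SimpleGraph.mem_commonNeighbors, Finset.notMem_empty,
      iff_false, not_and]
    intro h1 h2
    rw [distGraph_adj] at h1
    rw [distGraph_adj] at h2
    have h1' : G.dist y v = 4 := by rw [SimpleGraph.dist_comm]; exact h1
    have h2' : G.dist y w = 4 := by rw [SimpleGraph.dist_comm]; exact h2
    exact hnadj ((distGraph_adj v w).mpr (trans4 hconn hdiam hdrg C hc2 hb3 h1' h2' hne))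

include hconn hdiam hdrg in
lemma srg_to_b3 (C : G.Coloring (Fin 2)) {n' k' ℓ μ : ℕ}
    (hsrg : (G.distGraph 4).IsSRGWith n' k' ℓ μ) (hex4 : ∃ u v : V, G.dist u v = 4) :
    b 3 = 1 := by
  classical
  obtain ⟨u, v, huv⟩ := hex4
  obtain ⟨x, hux, hxv⟩ := exists_adj_dist_succ (show G.dist u v = 3 + 1 from huv)
  have hμ0 : μ = 0 := by
    have hune : u ≠ x := hux.ne
    have hnadj : ¬(G.distGraph 4).Adj u x := by
      rw [distGraph_adj]
      rw [SimpleGraph.dist_eq_one_iff_adj.mpr hux]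
      omega
    have hcard := hsrg.of_not_adj hune hnadj
    rw [← hcard, ← Set.toFinset_card, Finset.card_eq_zero]
    ext y
    simp only [Set.mem_toFinset, SimpleGraph.mem_commonNeighbors, Finset.notMem_empty,
      iff_false, not_and]
    intro h1 h2
    rw [distGraph_adj] at h1 h2
    have e1 : C u = C y := (dist_even_iff hconn C u y).mp (by rw [h1]; decide)
    have e2 : C x = C y := (dist_even_iff hconn C x y).mp (by rw [h2]; decide)
    exact (C.valid hux) (e1.trans e2.symm)
  have htrans : ∀ {p q r : V}, G.dist p q = 4 → G.dist p r = 4 → q ≠ r → G.dist q r = 4 := by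
    intro p q r h1 h2 hne
    by_contra hne4
    have hnadj : ¬(G.distGraph 4).Adj q r := fun h => hne4 h.2
    have hcard := hsrg.of_not_adj hne hnadj
    rw [hμ0] at hcard
    refine (Fintype.card_eq_zero_iff.mp hcard).false ⟨p, ?_⟩
    rw [SimpleGraph.mem_commonNeighbors, distGraph_adj, distGraph_adj,
      SimpleGraph.dist_comm (u := q), SimpleGraph.dist_comm (u := r)]
    exact ⟨h1, h2⟩
  obtain ⟨xv, hvxv, hxv3⟩ := exists_adj_dist_succ
    (show G.dist v u = 3 + 1 by rw [SimpleGraph.dist_comm]; exact huv)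
  have huxv : G.dist u xv = 3 := by rw [SimpleGraph.dist_comm]; exact hxv3
  have hcnt := (hdrg 3 (by omega) u xv huxv).2.2
  rw [← hcnt]
  have hset : (G.neighborFinset xv).filter (fun y => G.dist u y = 3 + 1) = {v} := by
    ext y
    simp only [Finset.mem_filter, SimpleGraph.mem_neighborFinset, Finset.mem_singleton]
    constructor
    · rintro ⟨hadjy, hy4⟩
      by_contra hne
      have hv4 : G.dist v y = 4 := htrans huv (by omega : G.dist u y = 4) (fun h => hne h.symm)
      have t1 : G.dist v y ≤ G.dist v xv + G.dist xv y := hconn.dist_triangle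
      have d1 : G.dist v xv = 1 := SimpleGraph.dist_eq_one_iff_adj.mpr hvxv
      have d2 : G.dist xv y = 1 := SimpleGraph.dist_eq_one_iff_adj.mpr hadjy
      omega
    · rintro rfl
      exact ⟨hvxv.symm, by omega⟩
  rw [hset, Finset.card_singleton]

end srg
end SDRGAux

namespace SDRGAux
variable {V : Type*} {G : SimpleGraph V}

section scal
open Matrix
variable [Fintype V] [DecidableEq V]

lemma eigen_scalar {α β : ℝ}
    (h : α • ((G.adjMatrix ℝ)*((G.adjMatrix ℝ)*(G.adjMatrix ℝ))) = β • (G.adjMatrix ℝ))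
    {μ : ℝ} (hμ : Module.End.HasEigenvalue G.adjEnd μ) : α * μ^3 = β * μ := by
  obtain ⟨x, hx0, hAx⟩ := eigen_vec hμ
  set A := G.adjMatrix ℝ with hA
  have h3 : (A*(A*A)) *ᵥ x = (μ^3) • x := by
    simp only [← Matrix.mulVec_mulVec, hAx, Matrix.mulVec_smul, smul_smul]
    congr 1; ring
  have h' := congrArg (fun M => M *ᵥ x) h
  simp only [Matrix.smul_mulVec, h3, hAx, smul_smul] at h'
  have hz : ((α * μ^3) - (β * μ)) • x = 0 := by
    rw [sub_smul, h', sub_self]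
  rcases smul_eq_zero.mp hz with h'' | h''
  · linarith
  · exact absurd h'' hx0

end scal
end SDRGAux

set_option maxHeartbeats 1000000 in
theorem stmt_6 {V : Type*} [Fintype V] [DecidableEq V] (G : SimpleGraph V)
    (n k : ℕ) (c a b : ℕ → ℕ) (lam : Fin 5 → ℝ) (m : Fin 5 → ℕ)
    (hn : Fintype.card V = n)
    (hconn : G.Connected)
    (hreg : G.IsRegularOfDegree k)
    (hdiam : ∀ u v : V, G.dist u v ≤ 4) (hdiam' : ∃ u v : V, G.dist u v = 4)
    (hdrg : G.IsDistRegular 4 c a b)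
    (hspec : G.HasSpectrum lam m)
    (hlam0 : lam 0 = (k : ℝ)) (hm0 : m 0 = 1)
    (hbip : G.Colorable 2) :
    G.IsStronglyDRG 4 ↔ lam 1 = Real.sqrt k := by
  classical
  obtain ⟨u0, v0, h40⟩ := hdiam'
  obtain ⟨C⟩ := hbip
  obtain ⟨hsa, hev, hall, hm⟩ := hspec
  have hex : ∀ i, i ≤ 4 → ∃ u v : V, G.dist u v = i := by
    intro i hi
    obtain ⟨x, hx, -⟩ := SDRGAux.exists_on_geodesic hconn h40 i hi
    exact ⟨u0, x, hx⟩
  have ha1 : a 1 = 0 := SDRGAux.a_eq_zero hconn hdrg C (by omega) (by omega) (hex 1 (by omega))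
  have ha2 : a 2 = 0 := SDRGAux.a_eq_zero hconn hdrg C (by omega) (by omega) (hex 2 (by omega))
  have ha3 : a 3 = 0 := SDRGAux.a_eq_zero hconn hdrg C (by omega) (by omega) (hex 3 (by omega))
  have ha4 : a 4 = 0 := SDRGAux.a_eq_zero hconn hdrg C (by omega) (by omega) (hex 4 (by omega))
  have hb0 : b 0 = k := SDRGAux.b_zero_eq hconn hreg hdrg u0
  have hc4 : c 4 = k := SDRGAux.c_four_eq hconn hreg hdiam hdrg C (hex 4 (by omega))
  have hc2 : 1 ≤ c 2 := SDRGAux.c_pos hconn hdrg (by omega) (by omega) (hex 2 (by omega))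
  have hc3 : 1 ≤ c 3 := SDRGAux.c_pos hconn hdrg (by omega) (by omega) (hex 3 (by omega))
  have hc4p : 1 ≤ c 4 := SDRGAux.c_pos hconn hdrg (by omega) (by omega) (hex 4 (by omega))
  have hb1 : 1 ≤ b 1 := SDRGAux.b_pos hconn hdrg (by omega) (hex 2 (by omega))
  have hk2 : 2 ≤ k := SDRGAux.k_ge_two hconn hreg hdrg (hex 1 (by omega)) (hex 2 (by omega))
  -- matrix identities
  have hid1 := SDRGAux.A_mul_Adist hconn hdiam hdrg (i := 1) (by omega) (by omega) ha1
  have hid2 := SDRGAux.A_mul_Adist hconn hdiam hdrg (i := 2) (by omega) (by omega) ha2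
  have hid3 := SDRGAux.A_mul_Adist hconn hdiam hdrg (i := 3) (by omega) (by omega) ha3
  have hid4 := SDRGAux.A_mul_Adist hconn hdiam hdrg (i := 4) (by omega) (by omega) ha4
  norm_num at hid1 hid2 hid3 hid4
  rw [SDRGAux.Adist_one] at hid1 hid2
  rw [SDRGAux.Adist_zero hconn] at hid1
  rw [hb0] at hid1
  rw [SDRGAux.Adist_big hdiam (le_refl 5), smul_zero, add_zero] at hid4
  have hI := SDRGAux.quintic_identity (G.adjMatrix ℝ) (SDRGAux.Adist G 2) (SDRGAux.Adist G 3)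
    (SDRGAux.Adist G 4) (k : ℝ) (c 2 : ℝ) (c 3 : ℝ) (c 4 : ℝ) (b 1 : ℝ) (b 2 : ℝ) (b 3 : ℝ)
    hid1 hid2 hid3 hid4
  -- lambda pinning
  obtain ⟨hl4, hl2, hl3⟩ := SDRGAux.lam_pin lam hsa hev hall hlam0 hreg C
  have hl1pos : 0 < lam 1 := by
    have h12 : lam 2 < lam 1 := hsa (by decide)
    linarith [hl2 ▸ h12]
  have hl1k : lam 1 < (k : ℝ) := by
    have h01 : lam 1 < lam 0 := hsa (by decide)
    rw [hlam0] at h01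
    exact h01
  have hkR : (2 : ℝ) ≤ (k : ℝ) := by exact_mod_cast hk2
  have hroot : ∀ μ : ℝ, Module.End.HasEigenvalue G.adjEnd μ →
      μ^5 + ((k : ℝ)^2 * (lam 1)^2) * μ = ((k : ℝ)^2 + (lam 1)^2) * μ^3 := by
    intro μ hμ
    obtain ⟨i, rfl⟩ := hall μ hμ
    fin_cases i <;> simp only [Fin.zero_eta, Fin.mk_one, Fin.reduceFinMk, Fin.isValue]
    · rw [hlam0]; ring
    · ring
    · rw [hl2]; ring
    · rw [hl3]; ring
    · rw [hl4]; ring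
  have hII := SDRGAux.poly_vanish ((k : ℝ)^2 + (lam 1)^2) ((k : ℝ)^2 * (lam 1)^2) hroot
  have e1 := eq_sub_of_add_eq hI
  have e2 := eq_sub_of_add_eq hII
  have e3 := e1.symm.trans e2
  have hdiff : (((k : ℝ) + (b 1 : ℝ)*(c 2 : ℝ) + (b 2 : ℝ)*(c 3 : ℝ) + (b 3 : ℝ)*(c 4 : ℝ))
        - ((k : ℝ)^2 + (lam 1)^2)) • ((G.adjMatrix ℝ)*((G.adjMatrix ℝ)*(G.adjMatrix ℝ)))
      = (((b 2 : ℝ)*(c 3 : ℝ)*(k : ℝ) + (b 3 : ℝ)*(c 4 : ℝ)*((k : ℝ) + (b 1 : ℝ)*(c 2 : ℝ)))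
        - (k : ℝ)^2 * (lam 1)^2) • (G.adjMatrix ℝ) := by
    rw [sub_smul, sub_smul]
    exact sub_eq_sub_iff_sub_eq_sub.mp e3
  have hker := SDRGAux.eigen_scalar hdiff (show Module.End.HasEigenvalue G.adjEnd (k : ℝ) by
    rw [← hlam0]; exact hev 0)
  have hl1er := SDRGAux.eigen_scalar hdiff (hev 1)
  have hkpos : (0 : ℝ) < (k : ℝ) := by linarith
  have hl1ne : lam 1 ≠ 0 := ne_of_gt hl1pos
  set α' := ((k : ℝ) + (b 1 : ℝ)*(c 2 : ℝ) + (b 2 : ℝ)*(c 3 : ℝ) + (b 3 : ℝ)*(c 4 : ℝ))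
      - ((k : ℝ)^2 + (lam 1)^2) with hα'
  set β' := ((b 2 : ℝ)*(c 3 : ℝ)*(k : ℝ) + (b 3 : ℝ)*(c 4 : ℝ)*((k : ℝ) + (b 1 : ℝ)*(c 2 : ℝ)))
      - (k : ℝ)^2 * (lam 1)^2 with hβ'
  have h1 : α' * (k : ℝ)^2 = β' := by
    have h1' : (α' * (k : ℝ)^2) * (k : ℝ) = β' * (k : ℝ) := by linear_combination hker
    exact mul_right_cancel₀ (ne_of_gt hkpos) h1'
  have h2 : α' * (lam 1)^2 = β' := by
    have h2' : (α' * (lam 1)^2) * (lam 1) = β' * (lam 1) := by linear_combination hl1er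
    exact mul_right_cancel₀ hl1ne h2'
  have hα0 : α' = 0 := by
    have hz : α' * ((k : ℝ)^2 - (lam 1)^2) = 0 := by linear_combination h1 - h2
    rcases mul_eq_zero.mp hz with h | h
    · exact h
    · exfalso; nlinarith
  have hβ0 : β' = 0 := by rw [← h1, hα0, zero_mul]
  have E1 : (k : ℝ) + (b 1 : ℝ)*(c 2 : ℝ) + (b 2 : ℝ)*(c 3 : ℝ) + (b 3 : ℝ)*(c 4 : ℝ)
      = (k : ℝ)^2 + (lam 1)^2 := by
    have := hα0
    rw [hα'] at this
    linarith [sub_eq_zero.mp this]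
  have E2 : (b 2 : ℝ)*(c 3 : ℝ)*(k : ℝ) + (b 3 : ℝ)*(c 4 : ℝ)*((k : ℝ) + (b 1 : ℝ)*(c 2 : ℝ))
      = (k : ℝ)^2 * (lam 1)^2 := by
    have := hβ0
    rw [hβ'] at this
    linarith [sub_eq_zero.mp this]
  have hc4R : ((c 4 : ℕ) : ℝ) = (k : ℝ) := by exact_mod_cast hc4
  have hXpos : (1 : ℝ) ≤ (b 1 : ℝ)*(c 2 : ℝ) := by
    have hb1R : (1 : ℝ) ≤ (b 1 : ℝ) := by exact_mod_cast hb1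
    have hc2R : (1 : ℝ) ≤ (c 2 : ℝ) := by exact_mod_cast hc2
    nlinarith
  constructor
  · rintro ⟨n', k', ℓ, μ, hsrg⟩
    have hb3 : b 3 = 1 := SDRGAux.srg_to_b3 hconn hdiam hdrg C hsrg (hex 4 (by omega))
    have hb3R : ((b 3 : ℕ) : ℝ) = 1 := by exact_mod_cast hb3
    rw [hb3R, hc4R, one_mul] at E1 E2
    have hfac : ((lam 1)^2 - (k : ℝ)) * ((k : ℝ) * ((k : ℝ) - 1)) = 0 := by
      linear_combination (k : ℝ) * E1 - E2
    have hL : (lam 1)^2 = (k : ℝ) := by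
      rcases mul_eq_zero.mp hfac with h | h
      · linarith [sub_eq_zero.mp h]
      · exfalso; nlinarith
    rw [← hL, Real.sqrt_sq hl1pos.le]
  · intro hsqrt
    have hL : (lam 1)^2 = (k : ℝ) := by
      rw [hsqrt]
      exact Real.sq_sqrt (by positivity)
    rw [hL, hc4R] at E1 E2
    have hfac : ((b 1 : ℝ)*(c 2 : ℝ)) * (((b 3 : ℝ) * (k : ℝ)) - (k : ℝ)) = 0 := by
      linear_combination E2 - (k : ℝ) * E1
    have hZ : ((b 3 : ℝ)) * (k : ℝ) = (k : ℝ) := by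
      rcases mul_eq_zero.mp hfac with h | h
      · exfalso; linarith
      · linarith [sub_eq_zero.mp h]
    have hb3 : b 3 = 1 := by
      have hb3R : (b 3 : ℝ) = 1 := by
        have hkne : (k : ℝ) ≠ 0 := ne_of_gt hkpos
        exact mul_right_cancel₀ hkne (hZ.trans (one_mul (k : ℝ)).symm)
      exact_mod_cast hb3R
    have hreg4 : ∀ u : V, (Finset.univ.filter (fun y => G.dist u y = 4)).card
        = (Finset.univ.filter (fun y => G.dist u0 y = 4)).card := fun u =>
      SDRGAux.k4_const hconn hreg hdrg hc2 hc3 hc4p u u0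
    exact ⟨_, _, _, _, SDRGAux.build_srg hconn hdiam hdrg C hc2 hb3 hreg4⟩
end

section
/- If G is bipartite and strongly distance-regular, then G is antipodal. -/
open Finset

attribute [local instance] Classical.propDecidable

lemma color_eq_iff_even_length {V : Type*} {G : SimpleGraph V} (C : G.Coloring (Fin 2))
    {u v : V} (p : G.Walk u v) : C u = C v ↔ Even p.length := by
  induction p with
  | nil => simp
  | @cons u x v h q ih =>
    have hne : C u ≠ C x := C.valid h
    have key : ∀ a b c : Fin 2, a ≠ b → ((a = c) ↔ ¬(b = c)) := by decide
    rw [SimpleGraph.Walk.length_cons, Nat.even_add_one, ← ih]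
    exact key _ _ _ hne

lemma color_eq_of_dist_four {V : Type*} {G : SimpleGraph V} (C : G.Coloring (Fin 2))
    {u v : V} (h : G.dist u v = 4) : C u = C v := by
  obtain ⟨p, hp⟩ := SimpleGraph.exists_walk_of_dist_ne_zero (by omega : G.dist u v ≠ 0)
  rw [color_eq_iff_even_length C p, hp, h]
  decide

theorem stmt_7 {V : Type*} [Fintype V] [DecidableEq V] (G : SimpleGraph V)
    (n k : ℕ) (c a b : ℕ → ℕ) (lam : Fin 5 → ℝ) (m : Fin 5 → ℕ)
    (hn : Fintype.card V = n)
    (hconn : G.Connected)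
    (hreg : G.IsRegularOfDegree k)
    (hdiam : ∀ u v : V, G.dist u v ≤ 4) (hdiam' : ∃ u v : V, G.dist u v = 4)
    (hdrg : G.IsDistRegular 4 c a b)
    (hspec : G.HasSpectrum lam m)
    (hlam0 : lam 0 = (k : ℝ)) (hm0 : m 0 = 1)
    (hbip : G.Colorable 2) (hsdrg : G.IsStronglyDRG 4) :
    G.IsAntipodal 4 := by
  obtain ⟨C⟩ := hbip
  obtain ⟨n4, k4, ℓ, μ, hsrg⟩ := hsdrg
  -- find an adjacent pair to show μ = 0
  obtain ⟨u0, v0, h4⟩ := hdiam'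
  obtain ⟨p, hp⟩ := SimpleGraph.exists_walk_of_dist_ne_zero (by omega : G.dist u0 v0 ≠ 0)
  have hμ : μ = 0 := by
    cases p with
    | nil => rw [h4] at hp; simp at hp
    | @cons _ x _ hadj q =>
      have hxne : u0 ≠ x := hadj.ne
      have hnadj : ¬ (G.distGraph 4).Adj u0 x := by
        rintro ⟨-, hd⟩
        exact C.valid hadj (color_eq_of_dist_four C hd)
      have hcard := hsrg.of_not_adj hxne hnadj
      rw [← hcard]
      refine Fintype.card_eq_zero_iff.mpr ⟨fun z => ?_⟩
      obtain ⟨⟨-, hz1⟩, ⟨-, hz2⟩⟩ := z.2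
      exact C.valid hadj ((color_eq_of_dist_four C hz1).trans
        (color_eq_of_dist_four C hz2).symm)
  constructor
  · exact fun u => Or.inl rfl
  · rintro u v (rfl | hd)
    · exact Or.inl rfl
    · right; rw [SimpleGraph.dist_comm]; exact hd
  · rintro u v w (rfl | huv) (rfl | hvw)
    · exact Or.inl rfl
    · exact Or.inr hvw
    · exact Or.inr huv
    · by_cases huw : u = w
      · exact Or.inl huw
      right
      by_contra hne
      have hnadj : ¬ (G.distGraph 4).Adj u w := fun h => hne h.2
      have hcard := hsrg.of_not_adj huw hnadj
      rw [hμ] at hcard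
      have hv : v ∈ (G.distGraph 4).commonNeighbors u w := by
        refine ⟨⟨?_, huv⟩, ?_, by rw [SimpleGraph.dist_comm]; exact hvw⟩
        · intro h; subst h; rw [SimpleGraph.dist_self] at huv; omega
        · intro h; subst h; rw [SimpleGraph.dist_self] at hvw; omega
      have : 0 < Fintype.card ((G.distGraph 4).commonNeighbors u w) :=
        Fintype.card_pos_iff.mpr ⟨⟨v, hv⟩⟩
      omega
end

section
/- One has ∑_{i=0}^{4} m_i·(λ_i − λ0)(λ_i − λ2)(λ_i − λ4) = n·(k·a1 − (λ0 + λ2 + λ4)·k − λ0·λ2·λ4); consequently, m1·π1 = m3·π3 if and only if k·a1 − (λ0 + λ2 + λ4)·k − λ0·λ2·λ4 = 0. -/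
open Finset

attribute [local instance] Classical.propDecidable

section AuxTrace

private lemma pow_apply_mem_eigen' {E : Type*} [AddCommGroup E] [Module ℝ E]
    (T : Module.End ℝ E) (μ : ℝ) (p : ℕ) {x : E} (hx : x ∈ Module.End.eigenspace T μ) :
    (T ^ p) x = μ ^ p • x := by
  induction p with
  | zero => simp
  | succ q ih =>
    rw [pow_succ', Module.End.mul_apply, ih, map_smul, Module.End.mem_eigenspace_iff.mp hx,
      smul_smul, ← pow_succ]

private lemma trace_pow_eq_sum' {E : Type*} [NormedAddCommGroup E] [InnerProductSpace ℝ E]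
    [FiniteDimensional ℝ E] (T : Module.End ℝ E) (hT : T.IsSymmetric)
    {d : ℕ} (lam : Fin d → ℝ) (hinj : Function.Injective lam)
    (hall : ∀ μ : ℝ, Module.End.HasEigenvalue T μ → ∃ i, μ = lam i)
    (p : ℕ) :
    LinearMap.trace ℝ E (T ^ p) =
      ∑ i, (Module.finrank ℝ (Module.End.eigenspace T (lam i)) : ℝ) * lam i ^ p := by
  set N : Fin d → Submodule ℝ E := fun i => Module.End.eigenspace T (lam i) with hN
  have hindep : iSupIndep N := (T.eigenspaces_iSupIndep).comp hinj
  have htop : (⨆ i, N i) = ⊤ := by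
    have h1 : (⨆ μ, Module.End.eigenspace T μ) = ⊤ :=
      Submodule.orthogonal_eq_bot_iff.mp hT.orthogonalComplement_iSup_eigenspaces_eq_bot
    refine le_antisymm le_top ?_
    rw [← h1]
    refine iSup_le fun μ => ?_
    by_cases hμ : Module.End.eigenspace T μ = ⊥
    · rw [hμ]; exact bot_le
    · obtain ⟨i, rfl⟩ := hall μ hμ
      exact le_iSup N i
  have hint : DirectSum.IsInternal N :=
    DirectSum.isInternal_submodule_of_iSupIndep_of_iSup_eq_top hindep htop
  have hmap : ∀ i, Set.MapsTo (T ^ p) (N i) (N i) := by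
    intro i x hx
    have : (T ^ p) x = lam i ^ p • x := pow_apply_mem_eigen' T _ p hx
    rw [this]
    exact Submodule.smul_mem _ _ hx
  rw [LinearMap.trace_eq_sum_trace_restrict hint hmap]
  refine Finset.sum_congr rfl fun i _ => ?_
  have hres : (T ^ p).restrict (hmap i) = (lam i ^ p) • (1 : Module.End ℝ (N i)) := by
    ext x
    simp only [LinearMap.restrict_apply, LinearMap.smul_apply, Module.End.one_apply,
      SetLike.val_smul]
    exact pow_apply_mem_eigen' T _ p x.2
  rw [hres, map_smul, LinearMap.trace_one, smul_eq_mul, mul_comm]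

end AuxTrace

theorem stmt_10 {V : Type*} [Fintype V] [DecidableEq V] (G : SimpleGraph V)
    (n k : ℕ) (c a b : ℕ → ℕ) (lam : Fin 5 → ℝ) (m : Fin 5 → ℕ)
    (hn : Fintype.card V = n)
    (hconn : G.Connected)
    (hreg : G.IsRegularOfDegree k)
    (hdiam : ∀ u v : V, G.dist u v ≤ 4) (hdiam' : ∃ u v : V, G.dist u v = 4)
    (hdrg : G.IsDistRegular 4 c a b)
    (hspec : G.HasSpectrum lam m)
    (hlam0 : lam 0 = (k : ℝ)) (hm0 : m 0 = 1)
    (pi : Fin 5 → ℝ) (hpi : ∀ i, pi i = ∏ j ∈ Finset.univ.erase i, |lam i - lam j|) :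
    (∑ i, (m i : ℝ) * (lam i - lam 0) * (lam i - lam 2) * (lam i - lam 4) =
      (n : ℝ) * ((k : ℝ) * a 1 - (lam 0 + lam 2 + lam 4) * k - lam 0 * lam 2 * lam 4)) ∧
    ((m 1 : ℝ) * pi 1 = (m 3 : ℝ) * pi 3 ↔
      (k : ℝ) * a 1 - (lam 0 + lam 2 + lam 4) * k - lam 0 * lam 2 * lam 4 = 0) := by
  classical
  obtain ⟨hanti, heig, hall, hmult⟩ := hspec
  set A : Matrix V V ℝ := G.adjMatrix ℝ with hA
  have hsymm : (Matrix.toEuclideanLin A).IsSymmetric := by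
    rw [← Matrix.isHermitian_iff_isSymmetric]
    unfold Matrix.IsHermitian
    rw [Matrix.conjTranspose_eq_transpose_of_trivial]
    exact G.isSymm_adjMatrix
  have hinj : Function.Injective lam := hanti.injective
  -- trace identity for powers
  have htr : ∀ p : ℕ, LinearMap.trace ℝ (EuclideanSpace ℝ V) ((Matrix.toEuclideanLin A) ^ p)
      = Matrix.trace (A ^ p) := by
    intro p
    have h : (Matrix.toEuclideanLin A) ^ p
        = Matrix.toLin (PiLp.basisFun 2 ℝ V) (PiLp.basisFun 2 ℝ V) (A ^ p) := by
      induction p with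
      | zero => simp [Matrix.toLin_one, Module.End.one_eq_id]
      | succ q ih => rw [pow_succ, pow_succ, ih, Matrix.toLin_mul (PiLp.basisFun 2 ℝ V)
          (PiLp.basisFun 2 ℝ V) (PiLp.basisFun 2 ℝ V), Matrix.toEuclideanLin_eq_toLin]; rfl
    rw [h, LinearMap.trace_eq_matrix_trace ℝ (PiLp.basisFun 2 ℝ V), LinearMap.toMatrix_toLin]
  have heq : ∀ μ, Module.End.eigenspace (Matrix.toEuclideanLin A) μ =
      (Module.End.eigenspace G.adjEnd μ).map
        ((WithLp.linearEquiv 2 ℝ (V → ℝ)).symm : (V → ℝ) →ₗ[ℝ] EuclideanSpace ℝ V) := by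
    intro μ; ext x
    rw [Submodule.mem_map_equiv]
    simp only [Module.End.mem_eigenspace_iff, LinearEquiv.symm_symm]
    exact Iff.intro (fun h => congrArg WithLp.ofLp h) (fun h => congrArg (WithLp.toLp 2) h)
  have hEig : ∀ μ, Module.End.HasEigenvalue (Matrix.toEuclideanLin A) μ →
      Module.End.HasEigenvalue G.adjEnd μ := by
    intro μ h
    rw [Module.End.hasEigenvalue_iff] at h ⊢
    rw [heq] at h
    intro h0; apply h; rw [h0, Submodule.map_bot]
  have key : ∀ p : ℕ, ∑ i, (m i : ℝ) * lam i ^ p = Matrix.trace (A ^ p) := by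
    intro p
    have h1 := trace_pow_eq_sum' (Matrix.toEuclideanLin A) hsymm lam hinj
      (fun μ h => hall μ (hEig μ h)) p
    rw [← htr p, h1]
    refine Finset.sum_congr rfl fun i _ => ?_
    congr 1
    exact congrArg (Nat.cast (R := ℝ)) ((hmult i).trans (by rw [heq, LinearEquiv.finrank_map_eq]))
  -- trace computations
  have e0 : ∑ i, (m i : ℝ) * lam i ^ 0 = (n : ℝ) := by
    rw [key 0, pow_zero, Matrix.trace_one, ← hn]
  have e1 : ∑ i, (m i : ℝ) * lam i ^ 1 = 0 := by
    rw [key 1, pow_one, hA, SimpleGraph.trace_adjMatrix]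
  have e2 : ∑ i, (m i : ℝ) * lam i ^ 2 = (n : ℝ) * k := by
    rw [key 2, pow_two, Matrix.trace]
    simp only [Matrix.diag_apply, hA, SimpleGraph.adjMatrix_mul_self_apply_self]
    have : ∀ u : V, (G.degree u : ℝ) = (k : ℝ) := fun u => by rw [hreg u]
    rw [Finset.sum_congr rfl fun u _ => this u, Finset.sum_const, Finset.card_univ,
      nsmul_eq_mul, hn]
  have h3 : ∀ u v : V, G.Adj u v →
      (((G.neighborFinset v).filter (fun w => G.dist u w = 1)).card = a 1) := by
    intro u v huv
    exact (hdrg 1 (by norm_num) u v ((SimpleGraph.dist_eq_one_iff_adj).mpr huv)).2.1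
  have e3 : ∑ i, (m i : ℝ) * lam i ^ 3 = (n : ℝ) * k * a 1 := by
    rw [key 3]
    have keyu : ∀ u : V, ((A ^ 3) u u) = (k : ℝ) * a 1 := by
      intro u
      have h30 : (A ^ 3) u u = (A * (A * A)) u u := by
        rw [pow_succ, pow_two, mul_assoc]
      rw [h30, hA, SimpleGraph.adjMatrix_mul_apply]
      have hvv : ∀ v ∈ G.neighborFinset u,
          ((G.adjMatrix ℝ) * (G.adjMatrix ℝ)) v u = (a 1 : ℝ) := by
        intro v hv
        rw [SimpleGraph.adjMatrix_mul_apply]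
        rw [SimpleGraph.mem_neighborFinset] at hv
        have : ∑ w ∈ G.neighborFinset v, (G.adjMatrix ℝ) w u
            = ∑ w ∈ G.neighborFinset v, (if G.dist u w = 1 then (1:ℝ) else 0) := by
          refine Finset.sum_congr rfl fun w _ => ?_
          rw [SimpleGraph.adjMatrix_apply]
          congr 1
          simp [SimpleGraph.dist_eq_one_iff_adj, eq_iff_iff, SimpleGraph.adj_comm]
        rw [this, Finset.sum_boole, h3 u v hv]
      rw [Finset.sum_congr rfl hvv, Finset.sum_const,
        SimpleGraph.card_neighborFinset_eq_degree, hreg u, nsmul_eq_mul]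
    rw [Matrix.trace]
    simp only [Matrix.diag_apply, keyu]
    rw [Finset.sum_const, Finset.card_univ, nsmul_eq_mul, hn, mul_assoc]
  -- expand the sums
  rw [Fin.sum_univ_five] at e0 e1 e2 e3
  have part1 : ∑ i, (m i : ℝ) * (lam i - lam 0) * (lam i - lam 2) * (lam i - lam 4) =
      (n : ℝ) * ((k : ℝ) * a 1 - (lam 0 + lam 2 + lam 4) * k - lam 0 * lam 2 * lam 4) := by
    rw [Fin.sum_univ_five]
    linear_combination e3 - (lam 0 + lam 2 + lam 4) * e2 +
      (lam 0 * lam 2 + lam 0 * lam 4 + lam 2 * lam 4) * e1 - (lam 0 * lam 2 * lam 4) * e0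
  refine ⟨part1, ?_⟩
  -- second part
  have hlt : ∀ i j : Fin 5, i < j → lam j < lam i := fun i j h => hanti h
  have l01 : lam 1 < lam 0 := hlt 0 1 (by decide)
  have l12 : lam 2 < lam 1 := hlt 1 2 (by decide)
  have l13 : lam 3 < lam 1 := hlt 1 3 (by decide)
  have l14 : lam 4 < lam 1 := hlt 1 4 (by decide)
  have l03 : lam 3 < lam 0 := hlt 0 3 (by decide)
  have l23 : lam 3 < lam 2 := hlt 2 3 (by decide)
  have l34 : lam 4 < lam 3 := hlt 3 4 (by decide)
  have hpi1 : pi 1 = (lam 0 - lam 1) * ((lam 1 - lam 2) * ((lam 1 - lam 3) * (lam 1 - lam 4))) := by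
    rw [hpi 1, show (Finset.univ.erase (1 : Fin 5)) = {0, 2, 3, 4} from by decide]
    rw [Finset.prod_insert (by decide), Finset.prod_insert (by decide),
      Finset.prod_insert (by decide), Finset.prod_singleton]
    rw [abs_of_neg (by linarith), abs_of_pos (by linarith), abs_of_pos (by linarith),
      abs_of_pos (by linarith)]
    ring
  have hpi3 : pi 3 = (lam 0 - lam 3) * ((lam 1 - lam 3) * ((lam 2 - lam 3) * (lam 3 - lam 4))) := by
    rw [hpi 3, show (Finset.univ.erase (3 : Fin 5)) = {0, 1, 2, 4} from by decide]
    rw [Finset.prod_insert (by decide), Finset.prod_insert (by decide),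
      Finset.prod_insert (by decide), Finset.prod_singleton]
    rw [abs_of_neg (by linarith), abs_of_neg (by linarith), abs_of_neg (by linarith),
      abs_of_pos (by linarith)]
    ring
  have hpart1' := part1
  rw [Fin.sum_univ_five] at hpart1'
  have hdiff : (m 3 : ℝ) * pi 3 - (m 1 : ℝ) * pi 1 = (lam 1 - lam 3) *
      ((n : ℝ) * ((k : ℝ) * a 1 - (lam 0 + lam 2 + lam 4) * k - lam 0 * lam 2 * lam 4)) := by
    rw [hpi1, hpi3]
    linear_combination (lam 1 - lam 3) * hpart1'
  have hn0 : (0 : ℝ) < (n : ℝ) := by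
    have : Nonempty V := hconn.nonempty
    have : 0 < Fintype.card V := Fintype.card_pos
    rw [hn] at this
    exact_mod_cast this
  have h13ne : lam 1 - lam 3 ≠ 0 := by linarith
  constructor
  · intro h
    have : (lam 1 - lam 3) *
        ((n : ℝ) * ((k : ℝ) * a 1 - (lam 0 + lam 2 + lam 4) * k - lam 0 * lam 2 * lam 4)) = 0 := by
      rw [← hdiff, h]; ring
    rcases mul_eq_zero.mp this with h' | h'
    · exact absurd h' h13ne
    · rcases mul_eq_zero.mp h' with h'' | h''
      · exact absurd h'' (by positivity)
      · exact h''
  · intro h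
    rw [h] at hdiff
    have : (m 3 : ℝ) * pi 3 - (m 1 : ℝ) * pi 1 = 0 := by rw [hdiff]; ring
    linarith
end

section
/- One has m0·π0 = m4·π4 if and only if k·(λ1 + λ2 + λ3) + λ1·λ2·λ3 = k·a1. -/
open Finset

attribute [local instance] Classical.propDecidable

theorem stmt_13 {V : Type*} [Fintype V] [DecidableEq V] (G : SimpleGraph V)
    (n k : ℕ) (c a b : ℕ → ℕ) (lam : Fin 5 → ℝ) (m : Fin 5 → ℕ)
    (hn : Fintype.card V = n)
    (hconn : G.Connected)
    (hreg : G.IsRegularOfDegree k)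
    (hdiam : ∀ u v : V, G.dist u v ≤ 4) (hdiam' : ∃ u v : V, G.dist u v = 4)
    (hdrg : G.IsDistRegular 4 c a b)
    (hspec : G.HasSpectrum lam m)
    (hlam0 : lam 0 = (k : ℝ)) (hm0 : m 0 = 1)
    (pi : Fin 5 → ℝ) (hpi : ∀ i, pi i = ∏ j ∈ Finset.univ.erase i, |lam i - lam j|) :
    (m 0 : ℝ) * pi 0 = (m 4 : ℝ) * pi 4 ↔
      (k : ℝ) * (lam 1 + lam 2 + lam 3) + lam 1 * lam 2 * lam 3 = (k : ℝ) * a 1 := by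
  classical
  obtain ⟨hanti, hev', hclass', hdim⟩ := hspec
  have hlaminj : Function.Injective lam := hanti.injective
  set A : Matrix V V ℝ := G.adjMatrix ℝ with hAdef
  have hA : A.IsHermitian := by
    rw [Matrix.IsHermitian, Matrix.conjTranspose]
    ext i j
    simp [hAdef, SimpleGraph.adj_comm]
  set ev : V → ℝ := hA.eigenvalues with hevdef
  set w : V → (V → ℝ) := fun i => ⇑(hA.eigenvectorBasis i) with hwdef
  -- each w i is an eigenvector of adjEnd for eigenvalue ev i
  have hevec : ∀ i : V, Module.End.HasEigenvector G.adjEnd (ev i) (w i) := by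
    intro i
    constructor
    · rw [Module.End.mem_eigenspace_iff]
      show Matrix.toLin' A (w i) = ev i • w i
      rw [Matrix.toLin'_apply, hA.mulVec_eigenvectorBasis]
    · have h := hA.eigenvectorBasis.toBasis.ne_zero i
      rw [OrthonormalBasis.coe_toBasis] at h
      intro hc
      exact h (by ext j; exact congrFun hc j)
  have hw : LinearIndependent ℝ w := by
    have h := (hA.eigenvectorBasis.toBasis.map
      (WithLp.linearEquiv 2 ℝ (V → ℝ))).linearIndependent
    have hfe : w = ⇑(hA.eigenvectorBasis.toBasis.map (WithLp.linearEquiv 2 ℝ (V → ℝ))) := by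
      funext i
      rw [Module.Basis.map_apply, OrthonormalBasis.coe_toBasis]
      rfl
    rw [hfe]
    exact h
  have hwspan : Submodule.span ℝ (Set.range w) = ⊤ := by
    have h := (hA.eigenvectorBasis.toBasis.map (WithLp.linearEquiv 2 ℝ (V → ℝ))).span_eq
    have hfe : w = ⇑(hA.eigenvectorBasis.toBasis.map (WithLp.linearEquiv 2 ℝ (V → ℝ))) := by
      funext i
      rw [Module.Basis.map_apply, OrthonormalBasis.coe_toBasis]
      rfl
    rw [hfe]
    exact h
  -- classification of eigenvalues
  have hclass : ∀ i : V, ∃ j : Fin 5, ev i = lam j := fun i =>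
    hclass' (ev i) (Module.End.hasEigenvalue_of_hasEigenvector (hevec i))
  set cl : V → Fin 5 := fun i => (hclass i).choose with hcldef
  have hcl : ∀ i : V, ev i = lam (cl i) := fun i => (hclass i).choose_spec
  set F : Fin 5 → Finset V := fun j => Finset.univ.filter (fun i => ev i = lam j) with hFdef
  -- multiplicities agree with fiber cardinalities
  have hMm : ∀ j : Fin 5, (F j).card = m j := by
    intro j
    have hle1 : (F j).card ≤ m j := by
      rw [hdim j]
      have hli : LinearIndependent ℝ
          (fun i : {i : V // ev i = lam j} =>
            (⟨w i.1, by
              have h := (hevec i.1).1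
              rwa [i.2] at h⟩ :
              Module.End.eigenspace G.adjEnd (lam j))) := by
        apply LinearIndependent.of_comp (Module.End.eigenspace G.adjEnd (lam j)).subtype
        exact hw.comp Subtype.val Subtype.val_injective
      have hcard := hli.fintype_card_le_finrank
      rwa [Fintype.card_subtype] at hcard
    have hle2 : m j ≤ (F j).card := by
      rw [hdim j]
      set S : Submodule ℝ (V → ℝ) :=
        Submodule.span ℝ (w '' {i : V | ev i = lam j}) with hSdef
      have hES : Module.End.eigenspace G.adjEnd (lam j) ≤ S := by
        intro x hx
        set T : Submodule ℝ (V → ℝ) :=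
          Submodule.span ℝ (w '' {i : V | ¬ ev i = lam j}) with hTdef
        have htop : S ⊔ T = ⊤ := by
          rw [hSdef, hTdef, ← Submodule.span_union, ← Set.image_union]
          have hU : ({i : V | ev i = lam j} ∪ {i : V | ¬ ev i = lam j}) = Set.univ := by
            ext i; by_cases h : ev i = lam j <;> simp [h]
          rw [hU, Set.image_univ, hwspan]
        have hx' : x ∈ S ⊔ T := htop ▸ Submodule.mem_top
        obtain ⟨s, hs, t, ht, rfl⟩ := Submodule.mem_sup.mp hx'
        have hsE : S ≤ Module.End.eigenspace G.adjEnd (lam j) := by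
          rw [hSdef, Submodule.span_le]
          rintro _ ⟨i, hi, rfl⟩
          have h := (hevec i).1
          rwa [hi] at h
        have htE : t ∈ ⨆ (μ : ℝ) (_ : μ ≠ lam j), Module.End.eigenspace G.adjEnd μ := by
          have hT : T ≤ ⨆ (μ : ℝ) (_ : μ ≠ lam j), Module.End.eigenspace G.adjEnd μ := by
            rw [hTdef, Submodule.span_le]
            rintro _ ⟨i, hi, rfl⟩
            have hne : lam (cl i) ≠ lam j := by
              rw [← hcl i]; exact hi
            have hmem : w i ∈ Module.End.eigenspace G.adjEnd (lam (cl i)) := by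
              have h := (hevec i).1
              rwa [hcl i] at h
            exact Submodule.mem_iSup_of_mem (lam (cl i)) (Submodule.mem_iSup_of_mem hne hmem)
          exact hT ht
        have htE' : t ∈ Module.End.eigenspace G.adjEnd (lam j) := by
          have hst : s + t ∈ Module.End.eigenspace G.adjEnd (lam j) := hx
          have hs' : s ∈ Module.End.eigenspace G.adjEnd (lam j) := hsE hs
          have := sub_mem hst hs'
          simpa using this
        have ht0 : t = 0 := by
          have hdisj := Module.End.eigenspaces_iSupIndep G.adjEnd (i := lam j)
          exact Submodule.disjoint_def.mp hdisj t htE' htE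
        rw [ht0, add_zero]
        exact hs
      have h1 : Module.finrank ℝ (Module.End.eigenspace G.adjEnd (lam j))
          ≤ Module.finrank ℝ S := Submodule.finrank_mono hES
      have h2 : Module.finrank ℝ S ≤ (F j).card := by
        have himg : w '' {i : V | ev i = lam j} = ↑((F j).image w) := by
          ext x
          simp [hFdef]
        rw [hSdef, himg]
        have hle := finrank_span_le_card (R := ℝ) (↑((F j).image w) : Set (V → ℝ))
        simp only [Finset.toFinset_coe] at hle
        exact le_trans hle Finset.card_image_le
      exact le_trans h1 h2
    exact le_antisymm hle1 hle2
  -- fiberwise sums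
  have hsum : ∀ g : V → ℝ, ∑ j : Fin 5, ∑ i ∈ F j, g i = ∑ i, g i := by
    intro g
    have h := Finset.sum_fiberwise_of_maps_to (s := (Finset.univ : Finset V))
      (t := (Finset.univ : Finset (Fin 5))) (g := cl) (f := g)
      (fun i _ => Finset.mem_univ (cl i))
    have hFeq : ∀ j : Fin 5, Finset.univ.filter (fun i => cl i = j) = F j := by
      intro j
      ext i
      simp only [Finset.mem_filter, Finset.mem_univ, true_and, hFdef]
      constructor
      · intro h'; rw [hcl i, h']
      · intro h'; exact hlaminj (by rw [← hcl i, h'])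
    rw [← h]
    exact Finset.sum_congr rfl (fun j _ => by rw [hFeq j])
  have hMf : ∀ f : ℝ → ℝ, ∑ j : Fin 5, ((F j).card : ℝ) * f (lam j) = ∑ i, f (ev i) := by
    intro f
    rw [← hsum (fun i => f (ev i))]
    refine Finset.sum_congr rfl (fun j _ => ?_)
    have hconst : ∑ i ∈ F j, f (ev i) = ∑ i ∈ F j, f (lam j) := by
      refine Finset.sum_congr rfl (fun i hi => ?_)
      simp only [hFdef, Finset.mem_filter] at hi
      rw [hi.2]
    rw [hconst, Finset.sum_const, nsmul_eq_mul]
  -- trace identities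
  have hU1 : star (hA.eigenvectorUnitary : Matrix V V ℝ) * (hA.eigenvectorUnitary : Matrix V V ℝ) = 1 :=
    (Matrix.mem_unitaryGroup_iff').mp (hA.eigenvectorUnitary).2
  have hconj : ∀ B : Matrix V V ℝ,
      Matrix.trace ((hA.eigenvectorUnitary : Matrix V V ℝ) * B *
        star (hA.eigenvectorUnitary : Matrix V V ℝ)) = Matrix.trace B := by
    intro B
    rw [Matrix.trace_mul_cycle, hU1, Matrix.one_mul]
  have hmul : ∀ B C : Matrix V V ℝ,
      ((hA.eigenvectorUnitary : Matrix V V ℝ) * B * star (hA.eigenvectorUnitary : Matrix V V ℝ)) *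
      ((hA.eigenvectorUnitary : Matrix V V ℝ) * C * star (hA.eigenvectorUnitary : Matrix V V ℝ)) =
      (hA.eigenvectorUnitary : Matrix V V ℝ) * (B * C) *
        star (hA.eigenvectorUnitary : Matrix V V ℝ) := by
    intro B C
    simp only [Matrix.mul_assoc]
    rw [← Matrix.mul_assoc (star _) _ _, hU1, Matrix.one_mul]
  have hDeq : Matrix.diagonal (RCLike.ofReal ∘ hA.eigenvalues) = Matrix.diagonal ev := by
    congr 1
  have hA1 : A = (hA.eigenvectorUnitary : Matrix V V ℝ) * Matrix.diagonal ev *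
      star (hA.eigenvectorUnitary : Matrix V V ℝ) := by
    rw [← hDeq]; exact hA.spectral_theorem
  have htr1 : ∑ i, ev i = 0 := by
    have h := congrArg Matrix.trace hA1
    rw [hconj, Matrix.trace_diagonal] at h
    have hz : Matrix.trace A = 0 := by
      simp only [hAdef]
      simp
    rw [hz] at h
    exact h.symm
  have htr2 : ∑ i, ev i * ev i = (Fintype.card V : ℝ) * k := by
    have h := congrArg (fun X : Matrix V V ℝ => Matrix.trace (X * X)) hA1
    rw [hmul, hconj, Matrix.diagonal_mul_diagonal, Matrix.trace_diagonal] at h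
    rw [← h, Matrix.trace]
    have hdg : ∀ v : V, (A * A).diag v = (k : ℝ) := by
      intro v
      simp only [hAdef, Matrix.diag_apply]
      rw [SimpleGraph.adjMatrix_mul_self_apply_self, hreg v]
    rw [Finset.sum_congr rfl (fun v _ => hdg v), Finset.sum_const, Finset.card_univ, nsmul_eq_mul]
  have htr3 : ∑ i, ev i * ev i * ev i = (Fintype.card V : ℝ) * ((k : ℝ) * (a 1)) := by
    have h := congrArg (fun X : Matrix V V ℝ => Matrix.trace (X * X * X)) hA1
    rw [hmul, hmul, hconj, Matrix.diagonal_mul_diagonal, Matrix.diagonal_mul_diagonal,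
      Matrix.trace_diagonal] at h
    rw [← h, Matrix.trace]
    have hdg : ∀ v : V, (A * A * A).diag v = (k : ℝ) * (a 1) := by
      intro v
      have h2 : ∀ u : V, G.Adj v u → ((A * A) u v : ℝ) = (a 1 : ℝ) := by
        intro u hadj
        have hd1 : G.dist u v = 1 := SimpleGraph.dist_eq_one_iff_adj.mpr hadj.symm
        have hset : (G.neighborFinset u).filter (fun w' => G.Adj w' v)
            = (G.neighborFinset v).filter (fun w' => G.dist u w' = 1) := by
          ext x
          simp only [Finset.mem_filter, SimpleGraph.mem_neighborFinset,
            SimpleGraph.dist_eq_one_iff_adj]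
          constructor
          · rintro ⟨h1, h2⟩; exact ⟨h2.symm, h1⟩
          · rintro ⟨h1, h2⟩; exact ⟨h2, h1.symm⟩
        have hcnt := (hdrg 1 (by norm_num) u v hd1).2.1
        simp only [hAdef]
        rw [SimpleGraph.adjMatrix_mul_apply]
        simp only [SimpleGraph.adjMatrix_apply]
        rw [Finset.sum_boole, hset, hcnt]
      have h3 : (A * A * A).diag v
          = ∑ u ∈ G.neighborFinset v, ((A * A) u v : ℝ) := by
        simp only [hAdef, Matrix.diag_apply, Matrix.mul_assoc]
        rw [SimpleGraph.adjMatrix_mul_apply]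
      rw [h3, Finset.sum_congr rfl (fun u hu => h2 u ((SimpleGraph.mem_neighborFinset G v u).mp hu)),
        Finset.sum_const]
      have hdeg : (G.neighborFinset v).card = k := hreg v
      rw [hdeg, nsmul_eq_mul]
    rw [Finset.sum_congr rfl (fun v _ => hdg v), Finset.sum_const, Finset.card_univ, nsmul_eq_mul]
  have htr0 : ∑ i : V, (1 : ℝ) = (Fintype.card V : ℝ) := by
    rw [Finset.sum_const, Finset.card_univ, nsmul_eq_mul, mul_one]
  -- the four moment equations
  have hS0 : ∑ j : Fin 5, ((m j : ℝ)) = (Fintype.card V : ℝ) := by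
    rw [← htr0, ← hMf (fun _ => 1)]
    exact Finset.sum_congr rfl (fun j _ => by rw [← hMm j, mul_one])
  have hS1 : ∑ j : Fin 5, (m j : ℝ) * lam j = 0 := by
    rw [← htr1, ← hMf (fun x => x)]
    exact Finset.sum_congr rfl (fun j _ => by rw [← hMm j])
  have hS2 : ∑ j : Fin 5, (m j : ℝ) * (lam j * lam j) = (Fintype.card V : ℝ) * k := by
    rw [← htr2, ← hMf (fun x => x * x)]
    exact Finset.sum_congr rfl (fun j _ => by rw [← hMm j])
  have hS3 : ∑ j : Fin 5, (m j : ℝ) * (lam j * lam j * lam j)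
      = (Fintype.card V : ℝ) * ((k : ℝ) * (a 1)) := by
    rw [← htr3, ← hMf (fun x => x * x * x)]
    exact Finset.sum_congr rfl (fun j _ => by rw [← hMm j])
  -- expand the sums
  rw [Fin.sum_univ_five] at hS0 hS1 hS2 hS3
  rw [hm0] at hS0 hS1 hS2 hS3
  rw [hlam0] at hS1 hS2 hS3
  -- pi values
  have herase0 : (Finset.univ.erase (0 : Fin 5)) = {1, 2, 3, 4} := by decide
  have herase4 : (Finset.univ.erase (4 : Fin 5)) = {0, 1, 2, 3} := by decide
  have habs : ∀ i j : Fin 5, i < j → |lam i - lam j| = lam i - lam j := fun i j h =>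
    abs_of_pos (sub_pos.mpr (hanti h))
  have habs' : ∀ i j : Fin 5, i < j → |lam j - lam i| = lam i - lam j := fun i j h => by
    rw [abs_sub_comm]; exact habs i j h
  have hpi0 : pi 0 = ((k:ℝ) - lam 1) * (((k:ℝ) - lam 2) * (((k:ℝ) - lam 3) * ((k:ℝ) - lam 4))) := by
    rw [hpi 0, herase0]
    rw [Finset.prod_insert (by decide), Finset.prod_insert (by decide),
      Finset.prod_insert (by decide), Finset.prod_singleton]
    rw [habs 0 1 (by decide), habs 0 2 (by decide), habs 0 3 (by decide), habs 0 4 (by decide),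
      hlam0]
  have hpi4 : pi 4 = ((k:ℝ) - lam 4) * ((lam 1 - lam 4) * ((lam 2 - lam 4) * (lam 3 - lam 4))) := by
    rw [hpi 4, herase4]
    rw [Finset.prod_insert (by decide), Finset.prod_insert (by decide),
      Finset.prod_insert (by decide), Finset.prod_singleton]
    rw [habs' 0 4 (by decide), habs' 1 4 (by decide), habs' 2 4 (by decide),
      habs' 3 4 (by decide), hlam0]
  have hk4 : lam 4 < (k : ℝ) := by
    rw [← hlam0]; exact hanti (by decide)
  have hNpos : (0 : ℝ) < (Fintype.card V : ℝ) := by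
    obtain ⟨u, _, _⟩ := hdiam'
    have : 0 < Fintype.card V := Fintype.card_pos_iff.mpr ⟨u⟩
    exact_mod_cast this
  have key : pi 0 - (m 4 : ℝ) * pi 4 =
      ((k:ℝ) - lam 4) * (Fintype.card V : ℝ) *
        ((k:ℝ) * (a 1) - ((k:ℝ) * (lam 1 + lam 2 + lam 3) + lam 1 * lam 2 * lam 3)) := by
    rw [hpi0, hpi4]
    linear_combination ((k:ℝ) - lam 4) *
      (hS3 - (lam 1 + lam 2 + lam 3) * hS2 +
        (lam 1 * lam 2 + lam 1 * lam 3 + lam 2 * lam 3) * hS1 -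
        (lam 1 * lam 2 * lam 3) * hS0)
  rw [hm0]
  push_cast
  constructor
  · intro h
    have h0 : pi 0 - (m 4 : ℝ) * pi 4 = 0 := by rw [← h]; ring
    rw [key] at h0
    have hne : ((k:ℝ) - lam 4) * (Fintype.card V : ℝ) ≠ 0 :=
      mul_ne_zero (by linarith) (by linarith)
    have := (mul_eq_zero.mp h0).resolve_left hne
    linarith [sub_eq_zero.mp this]
  · intro h
    have h0 : ((k:ℝ)) * (a 1) - ((k:ℝ) * (lam 1 + lam 2 + lam 3) + lam 1 * lam 2 * lam 3) = 0 := by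
      linarith
    have h1 : pi 0 - (m 4 : ℝ) * pi 4 = 0 := by rw [key, h0, mul_zero]
    linarith
end

section
/- If (λ1 + 1)(λ3 + 1) = −b1 and k·(λ1 + λ2 + λ3) + λ1·λ2·λ3 = k·a1, then λ1·λ3 = −k. -/
open Finset

attribute [local instance] Classical.propDecidable

theorem stmt_14 {V : Type*} [Fintype V] [DecidableEq V] (G : SimpleGraph V)
    (n k : ℕ) (c a b : ℕ → ℕ) (lam : Fin 5 → ℝ) (m : Fin 5 → ℕ)
    (hn : Fintype.card V = n)
    (hconn : G.Connected)
    (hreg : G.IsRegularOfDegree k)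
    (hdiam : ∀ u v : V, G.dist u v ≤ 4) (hdiam' : ∃ u v : V, G.dist u v = 4)
    (hdrg : G.IsDistRegular 4 c a b)
    (hspec : G.HasSpectrum lam m)
    (hlam0 : lam 0 = (k : ℝ)) (hm0 : m 0 = 1)
    (h1 : (lam 1 + 1) * (lam 3 + 1) = -(b 1 : ℝ))
    (h2 : (k : ℝ) * (lam 1 + lam 2 + lam 3) + lam 1 * lam 2 * lam 3 = (k : ℝ) * a 1) :
    lam 1 * lam 3 = -(k : ℝ) := by
  -- find an edge
  obtain ⟨u, v, huv⟩ := hdiam'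
  obtain ⟨p, -⟩ := SimpleGraph.exists_walk_of_dist_ne_zero (G := G) (u := u) (v := v)
    (by omega)
  have hadj : ∃ w : V, G.Adj u w := by
    cases p with
    | nil => rw [SimpleGraph.dist_self] at huv; exact absurd huv (by omega)
    | cons h q => exact ⟨_, h⟩
  obtain ⟨w, hw⟩ := hadj
  have hdw : G.dist u w = 1 := SimpleGraph.dist_eq_one_iff_adj.mpr hw
  obtain ⟨hc1, ha1, hb1⟩ := hdrg 1 (by norm_num) u w hdw
  set S := G.neighborFinset w with hS
  -- c 1 = 1
  have hc1' : c 1 = 1 := by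
    rw [← hc1]
    have : S.filter (fun x => G.dist u x = 1 - 1) = {u} := by
      ext x
      simp only [Finset.mem_filter, Finset.mem_singleton, hS,
        SimpleGraph.mem_neighborFinset]
      constructor
      · rintro ⟨-, hx⟩
        exact (hconn.dist_eq_zero_iff.mp hx).symm
      · rintro rfl
        exact ⟨hw.symm, hconn.dist_eq_zero_iff.mpr rfl⟩
    rw [this, Finset.card_singleton]
  -- partition
  have hmem : ∀ x ∈ S, G.dist u x = 0 ∨ G.dist u x = 1 ∨ G.dist u x = 2 := by
    intro x hx
    have hxd : G.dist w x = 1 := SimpleGraph.dist_eq_one_iff_adj.mpr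
      (by rwa [SimpleGraph.mem_neighborFinset] at hx)
    have := hconn.dist_triangle (u := u) (v := w) (w := x)
    omega
  have hcard : S.card = k := hreg w
  have hsum : (S.filter (fun x => G.dist u x = 1 - 1)).card
      + (S.filter (fun x => G.dist u x = 1)).card
      + (S.filter (fun x => G.dist u x = 1 + 1)).card = k := by
    have hunion : S = (S.filter (fun x => G.dist u x = 1 - 1))
        ∪ ((S.filter (fun x => G.dist u x = 1))
        ∪ (S.filter (fun x => G.dist u x = 1 + 1))) := by
      ext x
      simp only [Finset.mem_union, Finset.mem_filter]
      constructor
      · intro hx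
        rcases hmem x hx with h | h | h
        · exact Or.inl ⟨hx, by omega⟩
        · exact Or.inr (Or.inl ⟨hx, h⟩)
        · exact Or.inr (Or.inr ⟨hx, h⟩)
      · rintro (⟨hx, -⟩ | ⟨hx, -⟩ | ⟨hx, -⟩) <;> exact hx
    rw [← hcard]
    conv_rhs => rw [hunion]
    rw [Finset.card_union_of_disjoint, Finset.card_union_of_disjoint]
    · ring
    · rw [Finset.disjoint_filter]; intro x _ h h'; omega
    · rw [Finset.disjoint_left]
      intro x hx hx'
      simp only [Finset.mem_filter, Finset.mem_union] at hx hx'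
      rcases hx' with ⟨-, h⟩ | ⟨-, h⟩ <;> omega
  rw [hc1, ha1, hb1] at hsum
  rw [hc1'] at hsum
  -- now algebra
  have hab : (1 : ℝ) + (a 1 : ℝ) + (b 1 : ℝ) = (k : ℝ) := by exact_mod_cast hsum
  have hk2 : lam 2 < (k : ℝ) := by
    have := hspec.1 (show (0 : Fin 5) < 2 by decide)
    rwa [hlam0] at this
  have hfact : (lam 2 - (k : ℝ)) * ((k : ℝ) + lam 1 * lam 3) = 0 := by
    linear_combination h2 + (k : ℝ) * hab - (k : ℝ) * h1
  rcases mul_eq_zero.mp hfact with h | h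
  · linarith
  · linarith
end
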